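/- arXiv:1505.05103 — 4 statements merged into one kernel-verified Lean document; each statement's English description precedes it below -/
import Mathlib

section
/- Let (V_I, u_{I,i}, c_{I,i}) be an object of 𝒬ui_n^{Σ₁}, i.e. a finite hypercube quiver representation over ℂ whose maps satisfy the commutativity conditions and such that the spectra of u_{I,i} ∘ c_{I,i} and c_{I,i} ∘ u_{I,i} are contained in Σ₁. Define y_{I,i} := ψ(c_{I,i} ∘ u_{I,i}) ∘ c_{I,i} = c_{I,i} ∘ ψ(u_{I,i} ∘ c_{I,i}). Then (V_I, u_{I,i}, y_{I,i}) is an object of 𝒞_n: the maps satisfy the same commutativity conditions, and u_{I,i} ∘ y_{I,i} + Id and y_{I,i} ∘ u_{I,i} + Id are invertible for all I and all i ∉ I. -/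
open Complex

noncomputable section

/-- The set Σ: complex numbers `α` with `-1 ≤ Re α ≤ 0`, `Im α ≥ 0` if `Re α = -1`,
and `Im α < 0` if `Re α = 0`. -/
def SigmaSet : Set ℂ :=
  {α : ℂ | -1 ≤ α.re ∧ α.re ≤ 0 ∧ (α.re = -1 → 0 ≤ α.im) ∧ (α.re = 0 → α.im < 0)}

/-- The set Σ₁ := Σ + 1. -/
def Sigma1 : Set ℂ := {α : ℂ | α - 1 ∈ SigmaSet}

/-- The constant `2πi`. -/
def twoPiI : ℂ := 2 * Real.pi * Complex.I

/-- The exponential `exp(2πi·f)` of an endomorphism `f`. -/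
def expEnd {E : Type*} [NormedAddCommGroup E] [NormedSpace ℂ E] (f : E →L[ℂ] E) :
    E →L[ℂ] E :=
  NormedSpace.exp (twoPiI • f)

/-- The power series `ψ(A) := ∑_{k=1}^∞ ((2πi)^k / k!) A^(k-1)`. It satisfies
`A·ψ(A) = ψ(A)·A = exp(2πi·A) − Id`. -/
def psiEnd {E : Type*} [NormedAddCommGroup E] [NormedSpace ℂ E] (A : E →L[ℂ] E) :
    E →L[ℂ] E :=
  ∑' k : ℕ, ((twoPiI ^ (k + 1) / (Nat.factorial (k + 1) : ℂ)) • A ^ k)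

/-- Transport along an equality of index sets. -/
def castMap (V : Finset (Fin n) → Type*) [∀ I, NormedAddCommGroup (V I)]
    [∀ I, NormedSpace ℂ (V I)] {I J : Finset (Fin n)} (h : I = J) : V I →L[ℂ] V J := by
  subst h; exact ContinuousLinearMap.id ℂ (V I)

variable {n : ℕ}

/-- The data `(V_I, u_{I,i}, y_{I,i})` is a representation of the hypercube quiver:
the commutativity conditions
`u_{I∪{i},j} ∘ u_{I,i} = u_{I∪{j},i} ∘ u_{I,j}`,
`y_{I,i} ∘ y_{I∪{i},j} = y_{I,j} ∘ y_{I∪{j},i}` and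
`y_{I∪{i},j} ∘ u_{I∪{j},i} = u_{I,i} ∘ y_{I,j}` hold for all `i ≠ j` not in `I`. -/
def IsQuiRep (V : Finset (Fin n) → Type*) [∀ I, NormedAddCommGroup (V I)]
    [∀ I, NormedSpace ℂ (V I)]
    (u : ∀ (I : Finset (Fin n)) (i : Fin n), V I →L[ℂ] V (insert i I))
    (y : ∀ (I : Finset (Fin n)) (i : Fin n), V (insert i I) →L[ℂ] V I) : Prop :=
  ∀ (I : Finset (Fin n)) (i j : Fin n), i ∉ I → j ∉ I → i ≠ j →
    ((castMap V (Finset.insert_comm j i I)).comp ((u (insert i I) j).comp (u I i)) =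
      (u (insert j I) i).comp (u I j)) ∧
    ((y I i).comp (y (insert i I) j) =
      ((y I j).comp (y (insert j I) i)).comp (castMap V (Finset.insert_comm j i I))) ∧
    ((y (insert i I) j).comp ((castMap V (Finset.insert_comm i j I)).comp (u (insert j I) i)) =
      (u I i).comp (y I j))

/-- `(V_I, u_{I,i}, y_{I,i})` is an object of the category `𝒞_n`. -/
def IsCnObj (V : Finset (Fin n) → Type*) [∀ I, NormedAddCommGroup (V I)]
    [∀ I, NormedSpace ℂ (V I)]
    (u : ∀ (I : Finset (Fin n)) (i : Fin n), V I →L[ℂ] V (insert i I))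
    (y : ∀ (I : Finset (Fin n)) (i : Fin n), V (insert i I) →L[ℂ] V I) : Prop :=
  IsQuiRep V u y ∧ ∀ (I : Finset (Fin n)) (i : Fin n), i ∉ I →
    IsUnit ((u I i).comp (y I i) + ContinuousLinearMap.id ℂ (V (insert i I))) ∧
    IsUnit ((y I i).comp (u I i) + ContinuousLinearMap.id ℂ (V I))

/-- `(V_I, u_{I,i}, y_{I,i})` is an object of the category `𝒬ui_n^{Σ₁}`. -/
def IsQuiSigmaObj (V : Finset (Fin n) → Type*) [∀ I, NormedAddCommGroup (V I)]
    [∀ I, NormedSpace ℂ (V I)]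
    (u : ∀ (I : Finset (Fin n)) (i : Fin n), V I →L[ℂ] V (insert i I))
    (y : ∀ (I : Finset (Fin n)) (i : Fin n), V (insert i I) →L[ℂ] V I) : Prop :=
  IsQuiRep V u y ∧ ∀ (I : Finset (Fin n)) (i : Fin n), i ∉ I →
    spectrum ℂ ((u I i).comp (y I i)) ⊆ Sigma1 ∧
    spectrum ℂ ((y I i).comp (u I i)) ⊆ Sigma1
/-! ### Auxiliary lemmas about `psiEnd` -/

section PsiAux

variable {E F : Type*} [NormedAddCommGroup E] [NormedSpace ℂ E] [CompleteSpace E]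
  [NormedAddCommGroup F] [NormedSpace ℂ F] [CompleteSpace F]

lemma norm_twoPiI : ‖twoPiI‖ = 2 * Real.pi := by
  simp [twoPiI, Real.pi_nonneg, _root_.abs_of_nonneg]

lemma psi_summable (A : E →L[ℂ] E) :
    Summable (fun k : ℕ => ((twoPiI ^ (k + 1) / (Nat.factorial (k + 1) : ℂ)) • A ^ k)) := by
  apply Summable.of_norm
  have hexp : Summable (fun k : ℕ =>
      (2 * Real.pi) * ‖((Nat.factorial k : ℂ))⁻¹ • (twoPiI • A) ^ k‖) :=
    (NormedSpace.norm_expSeries_summable' (𝕂 := ℂ) (twoPiI • A)).mul_left _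
  refine Summable.of_nonneg_of_le (fun k => norm_nonneg _) (fun k => ?_) hexp
  have hA : (0:ℝ) ≤ ‖A ^ k‖ := norm_nonneg _
  have h1 : ‖(twoPiI ^ (k + 1) / (Nat.factorial (k + 1) : ℂ)) • A ^ k‖ =
      (2 * Real.pi) ^ (k + 1) / (Nat.factorial (k + 1) : ℝ) * ‖A ^ k‖ := by
    rw [norm_smul (twoPiI ^ (k + 1) / (Nat.factorial (k + 1) : ℂ)) (A ^ k),
      norm_div, norm_pow, norm_twoPiI, Complex.norm_natCast]
  have h2 : (2 * Real.pi) * ‖((Nat.factorial k : ℂ))⁻¹ • (twoPiI • A) ^ k‖ =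
      (2 * Real.pi) * ((2 * Real.pi) ^ k / (Nat.factorial k : ℝ) * ‖A ^ k‖) := by
    rw [smul_pow, smul_smul, norm_smul (((Nat.factorial k : ℂ))⁻¹ * twoPiI ^ k) (A ^ k),
      norm_mul, norm_inv, norm_pow, norm_twoPiI, Complex.norm_natCast]
    ring
  rw [h1, h2]
  have hfact : (Nat.factorial k : ℝ) ≤ (Nat.factorial (k + 1) : ℝ) := by
    exact_mod_cast Nat.factorial_le (Nat.le_succ k)
  have hfpos : (0:ℝ) < (Nat.factorial k : ℝ) := by positivity
  have : (2 * Real.pi) ^ (k + 1) / (Nat.factorial (k + 1) : ℝ) ≤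
      (2 * Real.pi) * ((2 * Real.pi) ^ k / (Nat.factorial k : ℝ)) := by
    rw [pow_succ, mul_comm ((2*Real.pi)^k), mul_div_assoc]
    gcongr
  calc (2 * Real.pi) ^ (k + 1) / (Nat.factorial (k + 1) : ℝ) * ‖A ^ k‖
      ≤ (2 * Real.pi) * ((2 * Real.pi) ^ k / (Nat.factorial k : ℝ)) * ‖A ^ k‖ := by
        gcongr
    _ = (2 * Real.pi) * ((2 * Real.pi) ^ k / (Nat.factorial k : ℝ) * ‖A ^ k‖) := by ring

lemma psi_pow_comp (A : E →L[ℂ] E) (A' : F →L[ℂ] F) (B : E →L[ℂ] F)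
    (h : B.comp A = A'.comp B) (k : ℕ) : B.comp (A ^ k) = (A' ^ k).comp B := by
  induction k with
  | zero => simp [ContinuousLinearMap.one_def]
  | succ k ih =>
    rw [pow_succ, pow_succ, ContinuousLinearMap.mul_def, ContinuousLinearMap.mul_def,
      ← ContinuousLinearMap.comp_assoc, ih, ContinuousLinearMap.comp_assoc, h,
      ← ContinuousLinearMap.comp_assoc]

lemma psi_intertwine (A : E →L[ℂ] E) (A' : F →L[ℂ] F) (B : E →L[ℂ] F)
    (h : B.comp A = A'.comp B) : B.comp (psiEnd A) = (psiEnd A').comp B := by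
  unfold psiEnd
  have hL : B.comp (∑' k : ℕ, ((twoPiI ^ (k + 1) / (Nat.factorial (k + 1) : ℂ)) • A ^ k)) =
      ∑' k : ℕ, B.comp ((twoPiI ^ (k + 1) / (Nat.factorial (k + 1) : ℂ)) • A ^ k) :=
    (ContinuousLinearMap.compL ℂ E E F B).map_tsum (psi_summable A)
  have hR : (∑' k : ℕ, ((twoPiI ^ (k + 1) / (Nat.factorial (k + 1) : ℂ)) • A' ^ k)).comp B =
      ∑' k : ℕ, ((twoPiI ^ (k + 1) / (Nat.factorial (k + 1) : ℂ)) • A' ^ k).comp B :=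
    ((ContinuousLinearMap.compL ℂ E F F).flip B).map_tsum (psi_summable A')
  rw [hL, hR]
  refine tsum_congr fun k => ?_
  rw [ContinuousLinearMap.comp_smul, ContinuousLinearMap.smul_comp, psi_pow_comp A A' B h]

lemma psi_comm_self (A : E →L[ℂ] E) : A * psiEnd A = psiEnd A * A := by
  have := psi_intertwine A A A rfl
  rw [ContinuousLinearMap.mul_def, ContinuousLinearMap.mul_def, this]

lemma expEnd_eq (A : E →L[ℂ] E) : expEnd A = 1 + A * psiEnd A := by
  unfold expEnd
  have hexp : NormedSpace.exp (twoPiI • A) =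
      ∑' n : ℕ, ((Nat.factorial n : ℂ))⁻¹ • (twoPiI • A) ^ n := by
    rw [NormedSpace.exp_eq_tsum ℂ]
  rw [hexp]
  have hs : Summable (fun n : ℕ => ((Nat.factorial n : ℂ))⁻¹ • (twoPiI • A) ^ n) :=
    NormedSpace.expSeries_summable' (𝕂 := ℂ) (twoPiI • A)
  rw [Summable.tsum_eq_zero_add hs]
  congr 1
  · simp
  · unfold psiEnd
    rw [← (psi_summable A).tsum_mul_left A]
    refine tsum_congr fun k => ?_
    rw [smul_pow, smul_smul, mul_smul_comm, ← pow_succ' A]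
    congr 1
    rw [div_eq_mul_inv, mul_comm]

lemma isUnit_one_add_mul_psi (A : E →L[ℂ] E) : IsUnit (A * psiEnd A + 1) := by
  have : A * psiEnd A + 1 = expEnd A := by rw [expEnd_eq, add_comm]
  rw [this]
  exact NormedSpace.isUnit_exp_of_mem_ball (𝕂 := ℂ) ((NormedSpace.expSeries_radius_eq_top ℂ (E →L[ℂ] E)).symm ▸ edist_lt_top _ _)

end PsiAux

/-! ### Auxiliary lemmas about `castMap` -/

lemma castMap_comp_castMap {n : ℕ} (V : Finset (Fin n) → Type*)
    [∀ I, NormedAddCommGroup (V I)] [∀ I, NormedSpace ℂ (V I)]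
    {I J K : Finset (Fin n)} (h1 : I = J) (h2 : J = K) :
    (castMap V h2).comp (castMap V h1) = castMap V (h1.trans h2) := by
  subst h1; subst h2; rfl

lemma castMap_rfl {n : ℕ} (V : Finset (Fin n) → Type*)
    [∀ I, NormedAddCommGroup (V I)] [∀ I, NormedSpace ℂ (V I)]
    {I : Finset (Fin n)} (h : I = I) :
    castMap V h = ContinuousLinearMap.id ℂ (V I) := rfl

/-- If `(V_I, u_{I,i}, c_{I,i})` is an object of `𝒬ui_n^{Σ₁}`, then setting
`y_{I,i} := ψ(c_{I,i} ∘ u_{I,i}) ∘ c_{I,i} = c_{I,i} ∘ ψ(u_{I,i} ∘ c_{I,i})`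
yields an object `(V_I, u_{I,i}, y_{I,i})` of `𝒞_n`. -/
theorem Q_well_defined {n : ℕ} (V : Finset (Fin n) → Type*)
    [∀ I, NormedAddCommGroup (V I)] [∀ I, NormedSpace ℂ (V I)]
    [∀ I, FiniteDimensional ℂ (V I)]
    (u : ∀ (I : Finset (Fin n)) (i : Fin n), V I →L[ℂ] V (insert i I))
    (c : ∀ (I : Finset (Fin n)) (i : Fin n), V (insert i I) →L[ℂ] V I)
    (h : IsQuiSigmaObj V u c) :
    (∀ (I : Finset (Fin n)) (i : Fin n),
      (psiEnd ((c I i).comp (u I i))).comp (c I i) =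
        (c I i).comp (psiEnd ((u I i).comp (c I i)))) ∧
    IsCnObj V u (fun I i => (psiEnd ((c I i).comp (u I i))).comp (c I i)) := by
  haveI : ∀ I : Finset (Fin n), CompleteSpace (V I) := fun I => FiniteDimensional.complete ℂ (V I)
  obtain ⟨hrep, -⟩ := h
  have part1 : ∀ (I : Finset (Fin n)) (i : Fin n),
      (psiEnd ((c I i).comp (u I i))).comp (c I i) =
        (c I i).comp (psiEnd ((u I i).comp (c I i))) := by
    intro I i
    exact (psi_intertwine ((u I i).comp (c I i)) ((c I i).comp (u I i)) (c I i)
      (by ext x; rfl)).symm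
  refine ⟨part1, ?_, ?_⟩
  · -- the quiver representation conditions
    intro I i j hi hj hij
    obtain ⟨h1, h2, h3⟩ := hrep I i j hi hj hij
    obtain ⟨h1s, h2s, h3s⟩ := hrep I j i hj hi hij.symm
    set u1 := u I i with hu1
    set c1 := c I i with hc1
    set u2 := u (insert i I) j with hu2
    set c2 := c (insert i I) j with hc2
    set u1' := u (insert j I) i with hu1'
    set c1' := c (insert j I) i with hc1'
    set u2' := u I j with hu2'
    set c2' := c I j with hc2'
    set κ := castMap V (Finset.insert_comm j i I) with hκ
    set κ' := castMap V (Finset.insert_comm i j I) with hκ'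
    -- pointwise versions of the hypotheses
    have hp1s : ∀ x, κ' (u1' (u2' x)) = u2 (u1 x) := fun x => by
      simpa using DFunLike.congr_fun h1s x
    have hp2 : ∀ x, c1 (c2 x) = c2' (c1' (κ x)) := fun x => by
      simpa using DFunLike.congr_fun h2 x
    have hp3 : ∀ x, c2 (κ' (u1' x)) = u1 (c2' x) := fun x => by
      simpa using DFunLike.congr_fun h3 x
    have hp3s : ∀ x, c1' (κ (u2 x)) = u2' (c1 x) := fun x => by
      simpa using DFunLike.congr_fun h3s x
    have hp2s : ∀ x, c2' (c1' x) = c1 (c2 (κ' x)) := fun x => by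
      simpa using DFunLike.congr_fun h2s x
    -- intermediate intertwining identities
    have K1 : (c2.comp u2).comp u1 = u1.comp (c2'.comp u2') := by
      ext x
      simp only [ContinuousLinearMap.comp_apply]
      rw [← hp1s x, hp3 (u2' x)]
    have K2 : c1.comp (c2.comp u2) = (c2'.comp u2').comp c1 := by
      ext x
      simp only [ContinuousLinearMap.comp_apply]
      rw [hp2 (u2 x), hp3s x]
    have K2s : c2'.comp (c1'.comp u1') = (c1.comp u1).comp c2' := by
      ext x
      simp only [ContinuousLinearMap.comp_apply]
      rw [hp2s (u1' x), hp3 x]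
    have Kcomm : (c1.comp u1).comp (c2'.comp u2') = (c2'.comp u2').comp (c1.comp u1) := by
      ext x
      simp only [ContinuousLinearMap.comp_apply]
      rw [← hp3 (u2' x), hp1s x, ← hp3s (u1 x), ← hp2 (u2 (u1 x))]
    -- psi versions
    have P1 : u1.comp (psiEnd (c2'.comp u2')) = (psiEnd (c2.comp u2)).comp u1 :=
      psi_intertwine _ _ _ K1.symm
    have P2 : c1.comp (psiEnd (c2.comp u2)) = (psiEnd (c2'.comp u2')).comp c1 :=
      psi_intertwine _ _ _ K2
    have P2s : c2'.comp (psiEnd (c1'.comp u1')) = (psiEnd (c1.comp u1)).comp c2' :=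
      psi_intertwine _ _ _ K2s
    have P3step : (c2'.comp u2').comp (psiEnd (c1.comp u1)) =
        (psiEnd (c1.comp u1)).comp (c2'.comp u2') :=
      psi_intertwine _ _ _ Kcomm.symm
    have P3 : (psiEnd (c1.comp u1)).comp (psiEnd (c2'.comp u2')) =
        (psiEnd (c2'.comp u2')).comp (psiEnd (c1.comp u1)) :=
      psi_intertwine _ _ _ P3step.symm
    have pp1 : ∀ x, u1 (psiEnd (c2'.comp u2') x) = psiEnd (c2.comp u2) (u1 x) := fun x => by
      simpa using DFunLike.congr_fun P1 x
    have pp2 : ∀ x, c1 (psiEnd (c2.comp u2) x) = psiEnd (c2'.comp u2') (c1 x) := fun x => by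
      simpa using DFunLike.congr_fun P2 x
    have pp2s : ∀ x, c2' (psiEnd (c1'.comp u1') x) = psiEnd (c1.comp u1) (c2' x) := fun x => by
      simpa using DFunLike.congr_fun P2s x
    have pp3 : ∀ x, psiEnd (c1.comp u1) (psiEnd (c2'.comp u2') x) =
        psiEnd (c2'.comp u2') (psiEnd (c1.comp u1) x) := fun x => by
      simpa using DFunLike.congr_fun P3 x
    refine ⟨h1, ?_, ?_⟩
    · -- relation for the y's
      ext x
      simp only [ContinuousLinearMap.comp_apply]
      rw [pp2 (c2 x), pp2s (c1' (κ x)), ← hp2 x, pp3 (c1 (c2 x))]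
    · -- mixed relation
      ext x
      simp only [ContinuousLinearMap.comp_apply]
      rw [hp3 x, pp1 (c2' x)]
  · -- invertibility
    intro I i _
    set u1 := u I i with hu1
    set c1 := c I i with hc1
    have Pu : u1.comp (psiEnd (c1.comp u1)) = (psiEnd (u1.comp c1)).comp u1 :=
      psi_intertwine _ _ _ (by ext x; rfl)
    have ppu : ∀ x, u1 (psiEnd (c1.comp u1) x) = psiEnd (u1.comp c1) (u1 x) := fun x => by
      simpa using DFunLike.congr_fun Pu x
    constructor
    · have e : u1.comp ((psiEnd (c1.comp u1)).comp c1) = psiEnd (u1.comp c1) * (u1.comp c1) := by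
        ext x
        simp only [ContinuousLinearMap.comp_apply, ContinuousLinearMap.mul_apply]
        rw [ppu (c1 x)]
      show IsUnit (u1.comp ((psiEnd (c1.comp u1)).comp c1) + ContinuousLinearMap.id ℂ _)
      rw [e, ← ContinuousLinearMap.one_def, ← psi_comm_self]
      exact isUnit_one_add_mul_psi _
    · have e : ((psiEnd (c1.comp u1)).comp c1).comp u1 = psiEnd (c1.comp u1) * (c1.comp u1) := by
        ext x
        simp only [ContinuousLinearMap.comp_apply, ContinuousLinearMap.mul_apply]
      show IsUnit (((psiEnd (c1.comp u1)).comp c1).comp u1 + ContinuousLinearMap.id ℂ _)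
      rw [e, ← ContinuousLinearMap.one_def, ← psi_comm_self]
      exact isUnit_one_add_mul_psi _
end
end

section
/- Let (V_I, u_{I,i}, w_{I,i}) be an object of 𝒞_n. For each I and i ∉ I let s_{I,i} : V_I → V_I be the unique linear map with spectrum contained in Σ₁ such that exp(2πi·s_{I,i}) = w_{I,i} ∘ u_{I,i} + Id, and set x_{I,i} := ψ(s_{I,i})^{−1} ∘ w_{I,i}. Then (V_I, u_{I,i}, x_{I,i}) is an object of 𝒬ui_n^{Σ₁}: the maps satisfy the hypercube commutativity conditions, and the spectra of x_{I,i} ∘ u_{I,i} and u_{I,i} ∘ x_{I,i} are contained in Σ₁. -/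
open Complex

noncomputable section

variable {n : ℕ}

/-! ### Auxiliary material -/

namespace QAux

open ContinuousLinearMap Polynomial

variable {E : Type*} [NormedAddCommGroup E] [NormedSpace ℂ E]
variable {F : Type*} [NormedAddCommGroup F] [NormedSpace ℂ F]
variable {G : Type*} [NormedAddCommGroup G] [NormedSpace ℂ G]

/-- The coefficients of the series `ψ`. -/
def psiCoef (k : ℕ) : ℂ := twoPiI ^ (k + 1) / (Nat.factorial (k + 1) : ℂ)

/-- The coefficients of the series for `exp (2πi·)`. -/
def expCoef (k : ℕ) : ℂ := (Nat.factorial k : ℂ)⁻¹ * twoPiI ^ k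

lemma psiCoef_eq (k : ℕ) : psiCoef k = expCoef (k + 1) := by
  rw [psiCoef, expCoef, div_eq_mul_inv, mul_comm]

lemma psiEnd_eq_tsum (A : E →L[ℂ] E) : psiEnd A = ∑' k : ℕ, psiCoef k • A ^ k := rfl

lemma norm_pow_le_one_mul {R : Type*} [NormedRing R] (a : R) :
    ∀ k : ℕ, ‖a ^ k‖ ≤ ‖(1 : R)‖ * ‖a‖ ^ k
  | 0 => by simp
  | (k + 1) => by
    calc ‖a ^ (k + 1)‖ = ‖a ^ k * a‖ := by rw [pow_succ]
    _ ≤ ‖a ^ k‖ * ‖a‖ := norm_mul_le _ _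
    _ ≤ (‖(1 : R)‖ * ‖a‖ ^ k) * ‖a‖ :=
      mul_le_mul_of_nonneg_right (norm_pow_le_one_mul a k) (norm_nonneg a)
    _ = ‖(1 : R)‖ * ‖a‖ ^ (k + 1) := by rw [mul_assoc, ← pow_succ]

section Ring
variable {R : Type*} [NormedRing R] [NormedAlgebra ℂ R] [CompleteSpace R]

lemma norm_psiCoef_le (k : ℕ) :
    ‖psiCoef k‖ ≤ ‖twoPiI‖ * (‖twoPiI‖ ^ k / (Nat.factorial k : ℝ)) := by
  have h1 : ‖psiCoef k‖ = ‖twoPiI‖ ^ (k + 1) / (Nat.factorial (k + 1) : ℝ) := by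
    rw [psiCoef, norm_div, norm_pow, Complex.norm_natCast]
  have h2 : (Nat.factorial k : ℝ) ≤ (Nat.factorial (k + 1) : ℝ) := by
    exact_mod_cast Nat.factorial_le (Nat.le_succ k)
  have h3 : ‖twoPiI‖ * (‖twoPiI‖ ^ k / (Nat.factorial k : ℝ))
      = ‖twoPiI‖ ^ (k + 1) / (Nat.factorial k : ℝ) := by
    rw [pow_succ']; ring
  rw [h1, h3]
  gcongr

lemma summable_psiSeries (a : R) : Summable (fun k : ℕ => psiCoef k • a ^ k) := by
  refine Summable.of_norm (Summable.of_nonneg_of_le (fun k => norm_nonneg _) (fun k => ?_)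
    ((Real.summable_pow_div_factorial (‖twoPiI‖ * ‖a‖)).mul_left (‖twoPiI‖ * ‖(1 : R)‖)))
  calc ‖psiCoef k • a ^ k‖ ≤ ‖psiCoef k‖ * ‖a ^ k‖ := norm_smul_le _ _
  _ ≤ (‖twoPiI‖ * (‖twoPiI‖ ^ k / (Nat.factorial k : ℝ))) * (‖(1 : R)‖ * ‖a‖ ^ k) :=
    mul_le_mul (norm_psiCoef_le k) (norm_pow_le_one_mul a k) (norm_nonneg _) (by positivity)
  _ = ‖twoPiI‖ * ‖(1 : R)‖ * ((‖twoPiI‖ * ‖a‖) ^ k / (Nat.factorial k : ℝ)) := by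
    rw [mul_pow]; ring

lemma summable_expSeries (a : R) : Summable (fun k : ℕ => expCoef k • a ^ k) := by
  refine (NormedSpace.expSeries_summable' (𝕂 := ℂ) (twoPiI • a)).congr fun k => ?_
  rw [_root_.smul_pow, smul_smul, expCoef]

end Ring

lemma exp_eq_tsum_expCoef [CompleteSpace E] (A : E →L[ℂ] E) :
    expEnd A = ∑' k : ℕ, expCoef k • A ^ k := by
  rw [expEnd]
  simp only [NormedSpace.exp_eq_tsum ℂ]
  exact tsum_congr fun k => by rw [_root_.smul_pow, smul_smul, expCoef]

lemma comp_pow {A : E →L[ℂ] E} {B : F →L[ℂ] F} {T : E →L[ℂ] F}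
    (h : T.comp A = B.comp T) : ∀ k : ℕ, T.comp (A ^ k) = (B ^ k).comp T
  | 0 => by simp [ContinuousLinearMap.one_def]
  | (k + 1) => by
    have h1 : T.comp (A ^ (k + 1)) = (T.comp (A ^ k)).comp A := by
      rw [pow_succ, ContinuousLinearMap.mul_def, ContinuousLinearMap.comp_assoc]
    rw [h1, comp_pow h k, ContinuousLinearMap.comp_assoc, h, ← ContinuousLinearMap.comp_assoc,
      ← ContinuousLinearMap.mul_def, ← pow_succ]

lemma comp_tsum (T : F →L[ℂ] G) {f : ℕ → (E →L[ℂ] F)} (hf : Summable f) :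
    T.comp (∑' k, f k) = ∑' k, T.comp (f k) := by
  simpa using (ContinuousLinearMap.compL ℂ E F G T).map_tsum hf

lemma tsum_comp (T : E →L[ℂ] F) {f : ℕ → (F →L[ℂ] G)} (hf : Summable f) :
    (∑' k, f k).comp T = ∑' k, (f k).comp T := by
  simpa using ((ContinuousLinearMap.compL ℂ E F G).flip T).map_tsum hf

lemma intertwine_psi [CompleteSpace E] [CompleteSpace F] {A : E →L[ℂ] E} {B : F →L[ℂ] F}
    {T : E →L[ℂ] F} (h : T.comp A = B.comp T) :
    T.comp (psiEnd A) = (psiEnd B).comp T := by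
  rw [psiEnd_eq_tsum, psiEnd_eq_tsum, comp_tsum T (summable_psiSeries A),
    tsum_comp T (summable_psiSeries B)]
  exact tsum_congr fun k => by rw [ContinuousLinearMap.comp_smul,
    ContinuousLinearMap.smul_comp, comp_pow h k]

lemma intertwine_exp [CompleteSpace E] [CompleteSpace F] {A : E →L[ℂ] E} {B : F →L[ℂ] F}
    {T : E →L[ℂ] F} (h : T.comp A = B.comp T) :
    T.comp (expEnd A) = (expEnd B).comp T := by
  rw [exp_eq_tsum_expCoef, exp_eq_tsum_expCoef, comp_tsum T (summable_expSeries A),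
    tsum_comp T (summable_expSeries B)]
  exact tsum_congr fun k => by rw [ContinuousLinearMap.comp_smul,
    ContinuousLinearMap.smul_comp, comp_pow h k]

lemma expEnd_eq_one_add_comp_psi [CompleteSpace E] (A : E →L[ℂ] E) :
    expEnd A = 1 + A.comp (psiEnd A) := by
  rw [exp_eq_tsum_expCoef, (summable_expSeries A).tsum_eq_zero_add,
    psiEnd_eq_tsum, comp_tsum A (summable_psiSeries A)]
  congr 1
  · simp [expCoef]
  · exact (tsum_congr fun k => by
      rw [ContinuousLinearMap.comp_smul, psiCoef_eq]
      congr 1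
      rw [pow_succ', ContinuousLinearMap.mul_def]).symm

lemma expEnd_eq_one_add_psi_comp [CompleteSpace E] (A : E →L[ℂ] E) :
    expEnd A = 1 + (psiEnd A).comp A := by
  rw [expEnd_eq_one_add_comp_psi]
  congr 1
  exact intertwine_psi rfl

/-! ### Scalar facts -/

lemma twoPiI_ne_zero : twoPiI ≠ 0 := by
  rw [twoPiI]
  simp [Real.pi_ne_zero, Complex.ofReal_ne_zero, Complex.I_ne_zero]

/-- scalar version of `ψ`. -/
def psiC (μ : ℂ) : ℂ := ∑' k : ℕ, psiCoef k * μ ^ k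

lemma summable_psiC (μ : ℂ) : Summable (fun k : ℕ => psiCoef k * μ ^ k) := by
  simpa [smul_eq_mul] using summable_psiSeries (R := ℂ) μ

lemma summable_expC (μ : ℂ) : Summable (fun k : ℕ => expCoef k * μ ^ k) := by
  simpa [smul_eq_mul] using summable_expSeries (R := ℂ) μ

lemma exp_twoPiI_eq_tsum (μ : ℂ) :
    Complex.exp (twoPiI * μ) = ∑' k : ℕ, expCoef k * μ ^ k := by
  rw [Complex.exp_eq_exp_ℂ, NormedSpace.exp_eq_tsum ℂ]
  exact tsum_congr fun k => by rw [smul_eq_mul, mul_pow, expCoef]; ring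

lemma psiC_mul_eq (μ : ℂ) : μ * psiC μ = Complex.exp (twoPiI * μ) - 1 := by
  rw [exp_twoPiI_eq_tsum, (summable_expC μ).tsum_eq_zero_add]
  have h0 : expCoef 0 * μ ^ 0 = 1 := by simp [expCoef]
  rw [h0, psiC, ← tsum_mul_left]
  rw [tsum_congr (f := fun k => μ * (psiCoef k * μ ^ k))
    (g := fun k => expCoef (k + 1) * μ ^ (k + 1)) (fun k => by rw [psiCoef_eq]; ring)]
  ring

lemma psiC_zero : psiC 0 = twoPiI := by
  rw [psiC, tsum_eq_single 0 (fun k hk => by simp [zero_pow hk])]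
  simp [psiCoef, twoPiI]

lemma int_of_exp_eq_one {z : ℂ} (h : Complex.exp (twoPiI * z) = 1) : ∃ n : ℤ, z = n := by
  rw [Complex.exp_eq_one_iff] at h
  obtain ⟨n, hn⟩ := h
  refine ⟨n, mul_left_cancel₀ twoPiI_ne_zero ?_⟩
  rw [hn, twoPiI]; ring

lemma mem_Sigma1 {μ : ℂ} (h : μ ∈ Sigma1) :
    -1 ≤ μ.re - 1 ∧ μ.re - 1 ≤ 0 ∧ (μ.re - 1 = -1 → 0 ≤ μ.im) ∧ (μ.re - 1 = 0 → μ.im < 0) := by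
  have h' : μ - 1 ∈ SigmaSet := h
  simpa [SigmaSet, Complex.sub_re, Complex.sub_im, Complex.one_re, Complex.one_im] using h'

lemma zero_mem_Sigma1 : (0 : ℂ) ∈ Sigma1 := by
  show (0 : ℂ) - 1 ∈ SigmaSet
  constructor
  · simp
  refine ⟨by simp, fun _ => by simp, fun h => absurd h (by simp)⟩

lemma psiC_ne_zero {μ : ℂ} (hμ : μ ∈ Sigma1) : psiC μ ≠ 0 := by
  rcases eq_or_ne μ 0 with rfl | hμ0
  · rw [psiC_zero]; exact twoPiI_ne_zero
  · intro h0
    have h1 : Complex.exp (twoPiI * μ) = 1 := by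
      have h2 := psiC_mul_eq μ
      rw [h0, mul_zero] at h2
      exact (eq_of_sub_eq_zero h2.symm)
    obtain ⟨n, rfl⟩ := int_of_exp_eq_one h1
    obtain ⟨c1, c2, _, c4⟩ := mem_Sigma1 hμ
    rw [Complex.intCast_re] at c1 c2 c4
    have hn0 : n ≠ 0 := fun h => hμ0 (by rw [h]; simp)
    have hb1 : (0 : ℝ) ≤ (n : ℝ) := by linarith
    have hb2 : (n : ℝ) ≤ 1 := by linarith
    have hn1 : n = 1 := by
      have : (0:ℤ) ≤ n := by exact_mod_cast hb1
      have : n ≤ 1 := by exact_mod_cast hb2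
      omega
    subst hn1
    have := c4 (by norm_num)
    rw [Complex.intCast_im] at this
    exact absurd this (by norm_num)

lemma exp_inj_Sigma1 {μ ν : ℂ} (hμ : μ ∈ Sigma1) (hν : ν ∈ Sigma1)
    (h : Complex.exp (twoPiI * μ) = Complex.exp (twoPiI * ν)) : μ = ν := by
  rw [Complex.exp_eq_exp_iff_exists_int] at h
  obtain ⟨n, hn⟩ := h
  have hμν : μ = ν + n := by
    apply mul_left_cancel₀ twoPiI_ne_zero
    rw [hn, twoPiI]; ring
  obtain ⟨a1, a2, a3, a4⟩ := mem_Sigma1 hμ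
  obtain ⟨b1, b2, b3, b4⟩ := mem_Sigma1 hν
  have hre : μ.re = ν.re + (n : ℝ) := by
    rw [hμν]; simp
  have him : μ.im = ν.im := by
    rw [hμν]; simp
  have hn1 : (-1 : ℝ) ≤ (n : ℝ) := by linarith
  have hn2 : (n : ℝ) ≤ 1 := by linarith
  have hcase : n = -1 ∨ n = 0 ∨ n = 1 := by
    have h1 : (-1 : ℤ) ≤ n := by exact_mod_cast hn1
    have h2 : n ≤ 1 := by exact_mod_cast hn2
    omega
  rcases hcase with rfl | rfl | rfl
  · exfalso
    push_cast at hre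
    have hμre : μ.re - 1 = -1 := by linarith
    have hνre : ν.re - 1 = 0 := by linarith
    have := a3 hμre
    have := b4 hνre
    linarith
  · rw [hμν]; simp
  · exfalso
    push_cast at hre
    have hμre : μ.re - 1 = 0 := by linarith
    have hνre : ν.re - 1 = -1 := by linarith
    have := a4 hμre
    have := b3 hνre
    linarith

/-! ### Eigenvector evaluation -/

lemma pow_apply_eig {A : E →L[ℂ] E} {v : E} {μ : ℂ} (h : A v = μ • v) :
    ∀ k : ℕ, (A ^ k) v = μ ^ k • v
  | 0 => by simp
  | (k + 1) => by
    rw [pow_succ, ContinuousLinearMap.mul_apply, h, map_smul, pow_apply_eig h k,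
      smul_smul, pow_succ, mul_comm]

lemma psiEnd_apply_eig [CompleteSpace E] {A : E →L[ℂ] E} {v : E} {μ : ℂ} (h : A v = μ • v) :
    psiEnd A v = psiC μ • v := by
  calc psiEnd A v = ∑' k : ℕ, (psiCoef k • A ^ k) v := by
        rw [psiEnd_eq_tsum]
        simpa using (ContinuousLinearMap.apply ℂ E v).map_tsum (summable_psiSeries A)
  _ = ∑' k : ℕ, (psiCoef k * μ ^ k) • v := tsum_congr fun k => by
        rw [ContinuousLinearMap.smul_apply, pow_apply_eig h k, smul_smul]
  _ = psiC μ • v := (summable_psiC μ).tsum_smul_const v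

lemma expEnd_apply_eig [CompleteSpace E] {A : E →L[ℂ] E} {v : E} {μ : ℂ} (h : A v = μ • v) :
    expEnd A v = Complex.exp (twoPiI * μ) • v := by
  calc expEnd A v = ∑' k : ℕ, (expCoef k • A ^ k) v := by
        rw [exp_eq_tsum_expCoef]
        simpa using (ContinuousLinearMap.apply ℂ E v).map_tsum (summable_expSeries A)
  _ = ∑' k : ℕ, (expCoef k * μ ^ k) • v := tsum_congr fun k => by
        rw [ContinuousLinearMap.smul_apply, pow_apply_eig h k, smul_smul]
  _ = (∑' k : ℕ, expCoef k * μ ^ k) • v := (summable_expC μ).tsum_smul_const v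
  _ = Complex.exp (twoPiI * μ) • v := by rw [exp_twoPiI_eq_tsum]
/-! ### Spectral facts -/

lemma algebraMap_clm_apply (μ : ℂ) (v : E) :
    (algebraMap ℂ (E →L[ℂ] E) μ) v = μ • v := by
  rw [Algebra.algebraMap_eq_smul_one]
  simp

lemma mem_spectrum_of_eigvec [CompleteSpace E] {A : E →L[ℂ] E} {μ : ℂ} {v : E}
    (hv : v ≠ 0) (h : A v = μ • v) : μ ∈ spectrum ℂ A := by
  rw [spectrum.mem_iff]
  intro hU
  rw [ContinuousLinearMap.isUnit_iff_bijective] at hU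
  apply hv
  apply hU.injective (a₂ := 0)
  rw [map_zero, ContinuousLinearMap.sub_apply, algebraMap_clm_apply, h, sub_self]

lemma exists_eigvec_of_mem_spectrum [FiniteDimensional ℂ E] {A : E →L[ℂ] E} {μ : ℂ}
    (hμ : μ ∈ spectrum ℂ A) : ∃ v : E, v ≠ 0 ∧ A v = μ • v := by
  rw [spectrum.mem_iff, ContinuousLinearMap.isUnit_iff_bijective] at hμ
  set g := algebraMap ℂ (E →L[ℂ] E) μ - A with hg
  have hni : ¬ Function.Injective g := by
    intro hinj
    exact hμ ⟨hinj, by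
      have h2 : Function.Injective (g : E →ₗ[ℂ] E) := by simpa using hinj
      simpa using (LinearMap.injective_iff_surjective).mp h2⟩
  rw [Function.not_injective_iff] at hni
  obtain ⟨a, b, hab, hne⟩ := hni
  refine ⟨a - b, sub_ne_zero.mpr hne, ?_⟩
  have h3 : g (a - b) = 0 := by rw [map_sub, hab, sub_self]
  rw [hg, ContinuousLinearMap.sub_apply, algebraMap_clm_apply, sub_eq_zero] at h3
  exact h3.symm

lemma isUnit_psiEnd [FiniteDimensional ℂ E] {A : E →L[ℂ] E}
    (hA : spectrum ℂ A ⊆ Sigma1) : IsUnit (psiEnd A) := by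
  rw [ContinuousLinearMap.isUnit_iff_bijective]
  have hinj : Function.Injective (psiEnd A) := by
    set K := LinearMap.ker (psiEnd A : E →ₗ[ℂ] E) with hK
    rcases eq_or_ne K ⊥ with hbot | hne
    · exact LinearMap.ker_eq_bot.mp hbot
    · exfalso
      haveI : Nontrivial K := Submodule.nontrivial_iff_ne_bot.mpr hne
      have hcomm : A.comp (psiEnd A) = (psiEnd A).comp A := intertwine_psi rfl
      have hAK : ∀ x ∈ K, A x ∈ K := by
        intro x hx
        rw [hK, LinearMap.mem_ker, ContinuousLinearMap.coe_coe] at hx ⊢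
        have h4 := ContinuousLinearMap.ext_iff.mp hcomm x
        simp only [ContinuousLinearMap.comp_apply] at h4
        rw [← h4, hx, map_zero]
      set f : Module.End ℂ K := (A : E →ₗ[ℂ] E).restrict hAK with hf
      obtain ⟨μ, hμ⟩ := Module.End.exists_eigenvalue f
      obtain ⟨v, hv⟩ := hμ.exists_hasEigenvector
      have hv0 : (v : E) ≠ 0 := fun h => hv.2 (Subtype.coe_injective h)
      have hveq : A (v : E) = μ • (v : E) := by
        have h5 := hv.apply_eq_smul
        calc A (v : E) = ((f v : K) : E) := (LinearMap.restrict_coe_apply _ _ _).symm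
        _ = ((μ • v : K) : E) := by rw [h5]
        _ = μ • (v : E) := rfl
      have hμS : μ ∈ spectrum ℂ A := mem_spectrum_of_eigvec hv0 hveq
      have h6 := psiEnd_apply_eig hveq
      have h7 : psiEnd A (v : E) = 0 := LinearMap.mem_ker.mp v.2
      rw [h7] at h6
      rcases smul_eq_zero.mp h6.symm with h8 | h8
      · exact psiC_ne_zero (hA hμS) h8
      · exact hv0 h8
  refine ⟨hinj, ?_⟩
  have h9 : Function.Injective ((psiEnd A : E →ₗ[ℂ] E)) := by simpa using hinj
  simpa using (LinearMap.injective_iff_surjective).mp h9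
set_option maxHeartbeats 2000000
set_option synthInstance.maxHeartbeats 400000

section InstanceHelpers

/-- Helper to find instances that the nested instance search fails to find. -/
noncomputable def topRingAux (H : Type*) [NormedAddCommGroup H] [NormedSpace ℂ H] :
    IsTopologicalRing (H →L[ℂ] H) := inferInstance

noncomputable def smulCommAux (H : Type*) [NormedAddCommGroup H] [NormedSpace ℂ H] :
    SMulCommClass ℂ (H →L[ℂ] H) (H →L[ℂ] H) := inferInstance

noncomputable def scalarTowerAux (H : Type*) [NormedAddCommGroup H] [NormedSpace ℂ H] :
    IsScalarTower ℂ (H →L[ℂ] H) (H →L[ℂ] H) := inferInstance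

noncomputable instance instTRnested : IsTopologicalRing ((E →L[ℂ] F) →L[ℂ] (E →L[ℂ] F)) :=
  topRingAux (E →L[ℂ] F)

noncomputable instance instSCnested :
    SMulCommClass ℂ ((E →L[ℂ] F) →L[ℂ] (E →L[ℂ] F)) ((E →L[ℂ] F) →L[ℂ] (E →L[ℂ] F)) :=
  smulCommAux (E →L[ℂ] F)

noncomputable instance instSTnested :
    IsScalarTower ℂ ((E →L[ℂ] F) →L[ℂ] (E →L[ℂ] F)) ((E →L[ℂ] F) →L[ℂ] (E →L[ℂ] F)) :=
  scalarTowerAux (E →L[ℂ] F)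

end InstanceHelpers

/-! ### Exponentials of left/right composition operators -/

lemma compL_pow_apply (B : F →L[ℂ] F) (S : E →L[ℂ] F) :
    ∀ k : ℕ, ((ContinuousLinearMap.compL ℂ E F F B) ^ k) S = (B ^ k).comp S
  | 0 => by simp [ContinuousLinearMap.one_def]
  | (k + 1) => by
    rw [pow_succ', ContinuousLinearMap.mul_apply, compL_pow_apply B S k]
    simp only [ContinuousLinearMap.compL_apply]
    rw [pow_succ', ContinuousLinearMap.mul_def, ContinuousLinearMap.comp_assoc]

lemma compR_pow_apply (A : E →L[ℂ] E) (S : E →L[ℂ] F) :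
    ∀ k : ℕ, (((ContinuousLinearMap.compL ℂ E E F).flip A) ^ k) S = S.comp (A ^ k)
  | 0 => by simp [ContinuousLinearMap.one_def]
  | (k + 1) => by
    rw [pow_succ', ContinuousLinearMap.mul_apply, compR_pow_apply A S k]
    simp only [ContinuousLinearMap.flip_apply, ContinuousLinearMap.compL_apply]
    rw [pow_succ, ContinuousLinearMap.mul_def, ContinuousLinearMap.comp_assoc]

lemma exp_compL_apply [CompleteSpace F] [CompleteSpace (E →L[ℂ] F)]
    (B : F →L[ℂ] F) (S : E →L[ℂ] F) :
    NormedSpace.exp (ContinuousLinearMap.compL ℂ E F F B) S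
      = (NormedSpace.exp B).comp S := by
  have h1 : NormedSpace.exp (ContinuousLinearMap.compL ℂ E F F B) S
      = ∑' k : ℕ, ((Nat.factorial k : ℂ)⁻¹ • (ContinuousLinearMap.compL ℂ E F F B) ^ k) S := by
    rw [NormedSpace.exp_eq_tsum ℂ]
    simpa using (ContinuousLinearMap.apply ℂ (E →L[ℂ] F) S).map_tsum
      (NormedSpace.expSeries_summable' (𝕂 := ℂ) (ContinuousLinearMap.compL ℂ E F F B))
  rw [h1, NormedSpace.exp_eq_tsum ℂ,
    tsum_comp S (NormedSpace.expSeries_summable' (𝕂 := ℂ) B)]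
  exact tsum_congr fun k => by
    rw [ContinuousLinearMap.smul_apply, compL_pow_apply, ContinuousLinearMap.smul_comp]

lemma exp_compR_apply [CompleteSpace E] [CompleteSpace (E →L[ℂ] F)]
    (A : E →L[ℂ] E) (S : E →L[ℂ] F) :
    NormedSpace.exp ((ContinuousLinearMap.compL ℂ E E F).flip A) S
      = S.comp (NormedSpace.exp A) := by
  have h1 : NormedSpace.exp ((ContinuousLinearMap.compL ℂ E E F).flip A) S
      = ∑' k : ℕ, ((Nat.factorial k : ℂ)⁻¹ • ((ContinuousLinearMap.compL ℂ E E F).flip A) ^ k) S := by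
    rw [NormedSpace.exp_eq_tsum ℂ]
    simpa using (ContinuousLinearMap.apply ℂ (E →L[ℂ] F) S).map_tsum
      (NormedSpace.expSeries_summable' (𝕂 := ℂ) ((ContinuousLinearMap.compL ℂ E E F).flip A))
  rw [h1, NormedSpace.exp_eq_tsum ℂ,
    comp_tsum S (NormedSpace.expSeries_summable' (𝕂 := ℂ) A)]
  exact tsum_congr fun k => by
    rw [ContinuousLinearMap.smul_apply, compR_pow_apply, ContinuousLinearMap.comp_smul]

/-! ### The key intertwining lemma -/

lemma key_intertwine [FiniteDimensional ℂ E] [FiniteDimensional ℂ F]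
    {A : E →L[ℂ] E} {B : F →L[ℂ] F} {T : E →L[ℂ] F}
    (hA : spectrum ℂ A ⊆ Sigma1) (hB : spectrum ℂ B ⊆ Sigma1)
    (hT : T.comp (expEnd A) = (expEnd B).comp T) :
    T.comp A = B.comp T := by
  set R0 : (E →L[ℂ] F) →L[ℂ] (E →L[ℂ] F) := (ContinuousLinearMap.compL ℂ E E F).flip A with hR0
  set L0 : (E →L[ℂ] F) →L[ℂ] (E →L[ℂ] F) := ContinuousLinearMap.compL ℂ E F F B with hL0
  set Δ : (E →L[ℂ] F) →L[ℂ] (E →L[ℂ] F) := R0 - L0 with hΔ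
  have hΔS : ∀ S : E →L[ℂ] F, Δ S = S.comp A - B.comp S := fun S => by
    rw [hΔ, ContinuousLinearMap.sub_apply, hR0, hL0]
    simp
  have hcomm : Commute (twoPiI • R0) (-(twoPiI • L0)) := by
    have hc : Commute R0 L0 := by
      show R0 * L0 = L0 * R0
      ext S
      simp only [ContinuousLinearMap.mul_apply, hR0, hL0, ContinuousLinearMap.flip_apply,
        ContinuousLinearMap.compL_apply]
      rw [ContinuousLinearMap.comp_assoc]
    exact ((hc.smul_left twoPiI).smul_right twoPiI).neg_right
  have hsum : twoPiI • Δ = twoPiI • R0 + -(twoPiI • L0) := by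
    rw [hΔ, smul_sub, sub_eq_add_neg]
  have hexpΔT : expEnd Δ T = T := by
    rw [expEnd, hsum, NormedSpace.exp_add_of_commute_of_mem_ball (𝕂 := ℂ) hcomm
      ((NormedSpace.expSeries_radius_eq_top ℂ ((E →L[ℂ] F) →L[ℂ] (E →L[ℂ] F))).symm ▸ edist_lt_top _ _)
      ((NormedSpace.expSeries_radius_eq_top ℂ ((E →L[ℂ] F) →L[ℂ] (E →L[ℂ] F))).symm ▸ edist_lt_top _ _), ContinuousLinearMap.mul_apply]
    have e1 : -(twoPiI • L0) = ContinuousLinearMap.compL ℂ E F F (-(twoPiI • B)) := by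
      rw [hL0, map_neg, map_smul]
    have e2 : twoPiI • R0 = (ContinuousLinearMap.compL ℂ E E F).flip (twoPiI • A) := by
      rw [hR0, map_smul]
    rw [e1, exp_compL_apply, e2, exp_compR_apply]
    have e3 : ((NormedSpace.exp (-(twoPiI • B))).comp T).comp (NormedSpace.exp (twoPiI • A))
        = (NormedSpace.exp (-(twoPiI • B))).comp ((expEnd B).comp T) := by
      rw [ContinuousLinearMap.comp_assoc]
      rw [show NormedSpace.exp (twoPiI • A) = expEnd A from rfl, hT]
    rw [e3, ← ContinuousLinearMap.comp_assoc]
    have e4 : (NormedSpace.exp (-(twoPiI • B))).comp (expEnd B) = 1 := by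
      rw [expEnd, ← ContinuousLinearMap.mul_def,
        ← NormedSpace.exp_add_of_commute_of_mem_ball (𝕂 := ℂ) (Commute.refl (twoPiI • B)).neg_left
          ((NormedSpace.expSeries_radius_eq_top ℂ (F →L[ℂ] F)).symm ▸ edist_lt_top _ _)
          ((NormedSpace.expSeries_radius_eq_top ℂ (F →L[ℂ] F)).symm ▸ edist_lt_top _ _),
        neg_add_cancel, NormedSpace.exp_zero]
    rw [e4, ContinuousLinearMap.one_def, ContinuousLinearMap.id_comp]
  set K := LinearMap.ker ((expEnd Δ - 1 : (E →L[ℂ] F) →L[ℂ] (E →L[ℂ] F)) :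
    (E →L[ℂ] F) →ₗ[ℂ] (E →L[ℂ] F)) with hKdef
  have hTK : T ∈ K := by
    rw [hKdef, LinearMap.mem_ker, ContinuousLinearMap.coe_coe, ContinuousLinearMap.sub_apply, hexpΔT,
      ContinuousLinearMap.one_apply, sub_self]
  have hcommΔ : Δ.comp (expEnd Δ) = (expEnd Δ).comp Δ := intertwine_exp rfl
  have hKinv : ∀ S ∈ K, Δ S ∈ K := by
    intro S hS
    rw [hKdef, LinearMap.mem_ker, ContinuousLinearMap.coe_coe] at hS ⊢
    rw [ContinuousLinearMap.sub_apply, ContinuousLinearMap.one_apply] at hS ⊢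
    rw [sub_eq_zero] at hS ⊢
    have h4 := ContinuousLinearMap.ext_iff.mp hcommΔ S
    simp only [ContinuousLinearMap.comp_apply] at h4
    rw [← h4, hS]
  set N : Module.End ℂ K := ((Δ : (E →L[ℂ] F) →ₗ[ℂ] (E →L[ℂ] F))).restrict hKinv with hN
  set N' : K →L[ℂ] K := LinearMap.toContinuousLinearMap N with hN'
  have h_incl : (K.subtypeL).comp N' = Δ.comp (K.subtypeL) := by
    ext x
    simp only [ContinuousLinearMap.comp_apply, Submodule.subtypeL_apply, hN',
      LinearMap.coe_toContinuousLinearMap', hN, LinearMap.restrict_coe_apply,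
      ContinuousLinearMap.coe_coe]
  have hspecN : spectrum ℂ N' ⊆ Sigma1 := by
    intro μ hμ
    obtain ⟨v, hv0, hveq⟩ := exists_eigvec_of_mem_spectrum hμ
    set S : E →L[ℂ] F := (v : E →L[ℂ] F) with hSdef
    have hS0 : S ≠ 0 := fun h => hv0 (Subtype.coe_injective h)
    have hSeq : Δ S = μ • S := by
      have h5 := ContinuousLinearMap.ext_iff.mp h_incl v
      simp only [ContinuousLinearMap.comp_apply, Submodule.subtypeL_apply] at h5
      rw [← h5, hveq]
      rfl
    have hSexp : expEnd Δ S = S := by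
      have h6 : (expEnd Δ - 1) S = 0 := LinearMap.mem_ker.mp v.2
      rw [ContinuousLinearMap.sub_apply, ContinuousLinearMap.one_apply, sub_eq_zero] at h6
      exact h6
    have hexp1 : Complex.exp (twoPiI * μ) = 1 := by
      have h7 := expEnd_apply_eig hSeq
      rw [hSexp] at h7
      have h8 : (Complex.exp (twoPiI * μ) - 1) • S = 0 := by
        rw [sub_smul, one_smul, ← h7, sub_self]
      rcases smul_eq_zero.mp h8 with h9 | h9
      · exact sub_eq_zero.mp h9
      · exact absurd h9 hS0
    set B' : F →L[ℂ] F := B + algebraMap ℂ (F →L[ℂ] F) μ with hB'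
    have hSAB : S.comp A = B'.comp S := by
      have h10 := hΔS S
      rw [hSeq] at h10
      have h10' : S.comp A = B.comp S + μ • S := by
        have := sub_eq_iff_eq_add.mp h10.symm
        rw [this]; abel
      have halg : (algebraMap ℂ (F →L[ℂ] F) μ).comp S = μ • S := by
        ext z
        simp [algebraMap_clm_apply]
      rw [h10', hB', ContinuousLinearMap.add_comp, halg]
    set A₀ : Module.End ℂ E := (A : E →ₗ[ℂ] E) with hA₀
    set B₀ : Module.End ℂ F := (B' : F →ₗ[ℂ] F) with hB₀
    set S₀ : E →ₗ[ℂ] F := (S : E →ₗ[ℂ] F) with hS₀def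
    have hS0AB : S₀ ∘ₗ A₀ = B₀ ∘ₗ S₀ := by
      rw [hA₀, hB₀, hS₀def, ← ContinuousLinearMap.toLinearMap_comp, ← ContinuousLinearMap.toLinearMap_comp, hSAB]
    have hpow : ∀ k : ℕ, S₀ ∘ₗ (A₀ ^ k) = (B₀ ^ k) ∘ₗ S₀ := by
      intro k
      induction k with
      | zero => simp [Module.End.one_eq_id]
      | succ k ih =>
        rw [pow_succ, pow_succ, Module.End.mul_eq_comp, Module.End.mul_eq_comp,
          ← LinearMap.comp_assoc, ih, LinearMap.comp_assoc, hS0AB, ← LinearMap.comp_assoc]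
    have hpoly : ∀ p : Polynomial ℂ,
        S₀ ∘ₗ (Polynomial.aeval A₀ p) = (Polynomial.aeval B₀ p) ∘ₗ S₀ := by
      intro p
      induction p using Polynomial.induction_on' with
      | add p q hp hq => rw [map_add, map_add, LinearMap.comp_add, LinearMap.add_comp, hp, hq]
      | monomial n a =>
        ext z
        have h11 := LinearMap.ext_iff.mp (hpow n) z
        simp only [LinearMap.comp_apply] at h11
        simp only [Polynomial.aeval_monomial, Algebra.algebraMap_eq_smul_one, smul_mul_assoc,
          one_mul, LinearMap.comp_apply, LinearMap.smul_apply, map_smul]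
        rw [h11]
    set q : Polynomial ℂ := minpoly ℂ A₀ with hqdef
    have hmono : q.Monic := minpoly.monic (LinearMap.isIntegral A₀)
    have hsplit : Polynomial.Splits q := IsAlgClosed.splits q
    have hfact : q = (q.roots.map fun a => Polynomial.X - Polynomial.C a).prod :=
      hsplit.eq_prod_roots_of_monic hmono
    have hz : ∃ z : E, S z ≠ 0 := by
      by_contra hc
      push_neg at hc
      exact hS0 (ContinuousLinearMap.ext fun z => by rw [hc z]; rfl)
    obtain ⟨z, hz0⟩ := hz
    have hq0 : (Polynomial.aeval B₀ q) (S₀ z) = 0 := by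
      have h12 := LinearMap.ext_iff.mp (hpoly q) z
      simp only [LinearMap.comp_apply] at h12
      rw [← h12, minpoly.aeval, LinearMap.zero_apply, map_zero]
    have hnu : ¬ IsUnit ((Polynomial.aeval B₀)
        (Multiset.map (fun x : ℂ => Polynomial.X - Polynomial.C x) q.roots).prod) := by
      rw [← hfact]
      intro hU
      have h13 : (↑hU.unit⁻¹ : Module.End ℂ F) * (Polynomial.aeval B₀ q) = 1 := hU.val_inv_mul
      have hinj : Function.Injective (Polynomial.aeval B₀ q) := by
        intro x y hxy
        calc x = ((↑hU.unit⁻¹ : Module.End ℂ F) * (Polynomial.aeval B₀ q)) x := by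
              rw [h13]; rfl
        _ = ((↑hU.unit⁻¹ : Module.End ℂ F) * (Polynomial.aeval B₀ q)) y := by
              simp only [Module.End.mul_apply, hxy]
        _ = y := by rw [h13]; rfl
      have h14 : S₀ z = 0 := hinj (by rw [hq0, map_zero])
      exact hz0 h14
    obtain ⟨k, hkspec, hkroot⟩ := spectrum.exists_mem_of_not_isUnit_aeval_prod hnu
    have hkB : (k - μ) ∈ spectrum ℂ B := by
      have hEig : Module.End.HasEigenvalue B₀ k :=
        Module.End.hasEigenvalue_iff_mem_spectrum.mpr hkspec
      obtain ⟨vv, hvv⟩ := hEig.exists_hasEigenvector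
      have h15 : B₀ vv = k • vv := hvv.apply_eq_smul
      have h16 : B₀ vv = B vv + μ • vv := by
        show B' vv = B vv + μ • vv
        rw [hB', ContinuousLinearMap.add_apply, algebraMap_clm_apply]
      have h14 : B vv = (k - μ) • vv := by
        rw [h16] at h15
        rw [sub_smul, ← h15]
        abel
      exact mem_spectrum_of_eigvec hvv.2 h14
    have hkA : k ∈ spectrum ℂ A := by
      have hEig : Module.End.HasEigenvalue A₀ k := by
        rw [Module.End.hasEigenvalue_iff_isRoot]
        exact hkroot
      obtain ⟨vv, hvv⟩ := hEig.exists_hasEigenvector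
      exact mem_spectrum_of_eigvec hvv.2 hvv.apply_eq_smul
    have hk_eq : k = k - μ := by
      apply exp_inj_Sigma1 (hA hkA) (hB hkB)
      rw [mul_sub, Complex.exp_sub, hexp1, div_one]
    have hμ0 : μ = 0 := sub_eq_self.mp hk_eq.symm
    rw [hμ0]
    exact zero_mem_Sigma1
  have hNunit : IsUnit (psiEnd N') := isUnit_psiEnd hspecN
  have hexpN : expEnd N' = 1 := by
    have h17 := intertwine_exp (T := K.subtypeL) h_incl
    ext x : 1
    have h18 := ContinuousLinearMap.ext_iff.mp h17 x
    simp only [ContinuousLinearMap.comp_apply, Submodule.subtypeL_apply] at h18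
    have h19 : (expEnd Δ - 1) (x : E →L[ℂ] F) = 0 := LinearMap.mem_ker.mp x.2
    rw [ContinuousLinearMap.sub_apply, ContinuousLinearMap.one_apply, sub_eq_zero] at h19
    refine Subtype.ext ?_
    rw [ContinuousLinearMap.one_apply, h18, h19]
  have hψ0 : N'.comp (psiEnd N') = 0 := by
    have h20 := expEnd_eq_one_add_comp_psi N'
    rw [hexpN] at h20
    exact (left_eq_add.mp h20)
  have hN0 : N' = 0 := by
    calc N' = N' * 1 := (mul_one N').symm
    _ = N' * (psiEnd N' * Ring.inverse (psiEnd N')) := by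
        rw [Ring.mul_inverse_cancel _ hNunit]
    _ = (N' * psiEnd N') * Ring.inverse (psiEnd N') := by rw [mul_assoc]
    _ = 0 := by
        rw [show N' * psiEnd N' = 0 from hψ0, zero_mul]
  have hΔT0 : Δ T = 0 := by
    have h21 := ContinuousLinearMap.ext_iff.mp h_incl ⟨T, hTK⟩
    simp only [ContinuousLinearMap.comp_apply, Submodule.subtypeL_apply] at h21
    rw [hN0] at h21
    simp only [ContinuousLinearMap.zero_apply, ZeroMemClass.coe_zero] at h21
    exact h21.symm
  have h22 := hΔS T
  rw [hΔT0] at h22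
  exact sub_eq_zero.mp h22.symm
/-! ### Inverse intertwining and spectrum swap -/

lemma inverse_intertwine {P : E →L[ℂ] E} {Q : F →L[ℂ] F} {T : E →L[ℂ] F}
    (hP : IsUnit P) (hQ : IsUnit Q) (h : T.comp P = Q.comp T) :
    (Ring.inverse Q).comp T = T.comp (Ring.inverse P) := by
  have h1 : P.comp (Ring.inverse P) = 1 := by
    rw [← ContinuousLinearMap.mul_def]; exact Ring.mul_inverse_cancel P hP
  have h2 : (Ring.inverse Q).comp Q = 1 := by
    rw [← ContinuousLinearMap.mul_def]; exact Ring.inverse_mul_cancel Q hQ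
  calc (Ring.inverse Q).comp T
      = ((Ring.inverse Q).comp T).comp (P.comp (Ring.inverse P)) := by
        rw [h1, ContinuousLinearMap.one_def, ContinuousLinearMap.comp_id]
  _ = (Ring.inverse Q).comp ((T.comp P).comp (Ring.inverse P)) := by
        simp only [ContinuousLinearMap.comp_assoc]
  _ = (Ring.inverse Q).comp ((Q.comp T).comp (Ring.inverse P)) := by rw [h]
  _ = (((Ring.inverse Q).comp Q).comp T).comp (Ring.inverse P) := by
        simp only [ContinuousLinearMap.comp_assoc]
  _ = T.comp (Ring.inverse P) := by
        rw [h2, ContinuousLinearMap.one_def, ContinuousLinearMap.id_comp]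

lemma isUnit_swap {f : E →L[ℂ] F} {g : F →L[ℂ] E} {μ : ℂ} (hμ : μ ≠ 0)
    (h : IsUnit (algebraMap ℂ (E →L[ℂ] E) μ - g.comp f)) :
    IsUnit (algebraMap ℂ (F →L[ℂ] F) μ - f.comp g) := by
  set a : E →L[ℂ] E := algebraMap ℂ (E →L[ℂ] E) μ - g.comp f with ha
  set C : E →L[ℂ] E := Ring.inverse a with hC
  have hC1 : ∀ y, a (C y) = y := fun y => by
    have h3 : a.comp C = 1 := by
      rw [← ContinuousLinearMap.mul_def]; exact Ring.mul_inverse_cancel a h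
    have h4 := ContinuousLinearMap.ext_iff.mp h3 y
    simpa using h4
  have hC2 : ∀ y, C (a y) = y := fun y => by
    have h3 : C.comp a = 1 := by
      rw [← ContinuousLinearMap.mul_def]; exact Ring.inverse_mul_cancel a h
    have h4 := ContinuousLinearMap.ext_iff.mp h3 y
    simpa using h4
  have ha_apply : ∀ y, a y = μ • y - g (f y) := fun y => by
    rw [ha]; simp [algebraMap_clm_apply]
  refine isUnit_iff_exists.mpr ⟨μ⁻¹ • ((1 : F →L[ℂ] F) + f.comp (C.comp g)), ?_, ?_⟩
  · ext z
    simp only [ContinuousLinearMap.mul_apply, ContinuousLinearMap.smul_apply,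
      ContinuousLinearMap.add_apply, ContinuousLinearMap.one_apply,
      ContinuousLinearMap.comp_apply, ContinuousLinearMap.sub_apply, algebraMap_clm_apply,
      ContinuousLinearMap.one_def, ContinuousLinearMap.id_apply]
    have hkey : g (f (C (g z))) = μ • C (g z) - g z := by
      have h3 := hC1 (g z)
      rw [ha_apply] at h3
      have h5 := sub_eq_iff_eq_add.mp h3
      rw [h5]; abel
    have e1 : μ • (μ⁻¹ • (z + f (C (g z)))) = z + f (C (g z)) := by
      rw [smul_smul, mul_inv_cancel₀ hμ, one_smul]
    have e2 : g (μ⁻¹ • (z + f (C (g z)))) = μ⁻¹ • (g z + g (f (C (g z)))) := by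
      rw [map_smul, map_add]
    have e3 : g z + g (f (C (g z))) = μ • C (g z) := by rw [hkey]; abel
    have e4 : f (g (μ⁻¹ • (z + f (C (g z))))) = f (C (g z)) := by
      rw [e2, e3, smul_smul, inv_mul_cancel₀ hμ, one_smul]
    rw [e1, e4]
    abel
  · ext z
    simp only [ContinuousLinearMap.mul_apply, ContinuousLinearMap.smul_apply,
      ContinuousLinearMap.add_apply, ContinuousLinearMap.one_apply,
      ContinuousLinearMap.comp_apply, ContinuousLinearMap.sub_apply, algebraMap_clm_apply,
      ContinuousLinearMap.id_apply]
    have hkey2 : g (μ • z - f (g z)) = a (g z) := by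
      rw [ha_apply, map_sub, map_smul]
    rw [hkey2, hC2]
    rw [show μ • z - f (g z) + f (g z) = μ • z by abel, smul_smul, inv_mul_cancel₀ hμ, one_smul]

lemma spectrum_swap_subset {f : E →L[ℂ] F} {g : F →L[ℂ] E}
    (h : spectrum ℂ (g.comp f) ⊆ Sigma1) : spectrum ℂ (f.comp g) ⊆ Sigma1 := by
  intro μ hμ
  rcases eq_or_ne μ 0 with rfl | hμ0
  · exact zero_mem_Sigma1
  · apply h
    rw [spectrum.mem_iff] at hμ ⊢
    intro hU
    exact hμ (isUnit_swap hμ0 hU)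

/-! ### castMap lemmas -/

lemma castMap_trans {n : ℕ} (V : Finset (Fin n) → Type*) [∀ I, NormedAddCommGroup (V I)]
    [∀ I, NormedSpace ℂ (V I)] {I J K : Finset (Fin n)} (h1 : I = J) (h2 : J = K) :
    (castMap V h2).comp (castMap V h1) = castMap V (h1.trans h2) := by
  subst h1; subst h2; rfl

lemma castMap_self {n : ℕ} (V : Finset (Fin n) → Type*) [∀ I, NormedAddCommGroup (V I)]
    [∀ I, NormedSpace ℂ (V I)] {I : Finset (Fin n)} (h : I = I) :
    castMap V h = ContinuousLinearMap.id ℂ (V I) := rfl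
end QAux

/-- If `(V_I, u_{I,i}, w_{I,i})` is an object of `𝒞_n` and `s_{I,i}` is the unique
endomorphism with spectrum in Σ₁ and `exp(2πi·s_{I,i}) = w_{I,i} ∘ u_{I,i} + Id`, then
setting `x_{I,i} := ψ(s_{I,i})⁻¹ ∘ w_{I,i}` yields an object `(V_I, u_{I,i}, x_{I,i})`
of `𝒬ui_n^{Σ₁}`. -/
theorem G_well_defined {n : ℕ} (V : Finset (Fin n) → Type*)
    [∀ I, NormedAddCommGroup (V I)] [∀ I, NormedSpace ℂ (V I)]
    [∀ I, FiniteDimensional ℂ (V I)]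
    (u : ∀ (I : Finset (Fin n)) (i : Fin n), V I →L[ℂ] V (insert i I))
    (w : ∀ (I : Finset (Fin n)) (i : Fin n), V (insert i I) →L[ℂ] V I)
    (h : IsCnObj V u w)
    (s : ∀ (I : Finset (Fin n)) (i : Fin n), V I →L[ℂ] V I)
    (hs : ∀ (I : Finset (Fin n)) (i : Fin n), i ∉ I →
      spectrum ℂ (s I i) ⊆ Sigma1 ∧
      expEnd (s I i) = (w I i).comp (u I i) + ContinuousLinearMap.id ℂ (V I)) :
    IsQuiSigmaObj V u (fun I i => (Ring.inverse (psiEnd (s I i))).comp (w I i)) := by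

  classical
  obtain ⟨hrep, -⟩ := h
  have hspec : ∀ (I : Finset (Fin n)) (i : Fin n), i ∉ I → spectrum ℂ (s I i) ⊆ Sigma1 :=
    fun I i hi => (hs I i hi).1
  have hexp : ∀ (I : Finset (Fin n)) (i : Fin n), i ∉ I →
      expEnd (s I i) = (w I i).comp (u I i) + ContinuousLinearMap.id ℂ (V I) :=
    fun I i hi => (hs I i hi).2
  have hunit : ∀ (I : Finset (Fin n)) (i : Fin n), i ∉ I → IsUnit (psiEnd (s I i)) :=
    fun I i hi => QAux.isUnit_psiEnd (hspec I i hi)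
  have hwu : ∀ (I : Finset (Fin n)) (i : Fin n), i ∉ I →
      (w I i).comp (u I i) = (psiEnd (s I i)).comp (s I i) := by
    intro I i hi
    have h1 := hexp I i hi
    rw [QAux.expEnd_eq_one_add_psi_comp (s I i)] at h1
    have h2 : ContinuousLinearMap.id ℂ (V I) = (1 : V I →L[ℂ] V I) := rfl
    rw [h2] at h1
    exact (add_left_cancel (h1.trans (add_comm _ _))).symm
  have hxu : ∀ (I : Finset (Fin n)) (i : Fin n), i ∉ I →
      ((Ring.inverse (psiEnd (s I i))).comp (w I i)).comp (u I i) = s I i := by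
    intro I i hi
    rw [ContinuousLinearMap.comp_assoc, hwu I i hi, ← ContinuousLinearMap.comp_assoc]
    have h2 : (Ring.inverse (psiEnd (s I i))).comp (psiEnd (s I i)) = 1 := by
      rw [← ContinuousLinearMap.mul_def]; exact Ring.inverse_mul_cancel _ (hunit I i hi)
    rw [h2, ContinuousLinearMap.one_def, ContinuousLinearMap.id_comp]
  -- derived quiver relations for `w ∘ u`
  have hWU : ∀ (I : Finset (Fin n)) (i j : Fin n), i ∉ I → j ∉ I → i ≠ j →
      (w I i).comp ((w (insert i I) j).comp (u (insert i I) j))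
        = ((w I j).comp (u I j)).comp (w I i) := by
    intro I i j hi hj hij
    obtain ⟨-, Rw, -⟩ := hrep I i j hi hj hij
    obtain ⟨-, -, Rm'⟩ := hrep I j i hj hi hij.symm
    have pRw : ∀ z, (w I i) ((w (insert i I) j) z)
        = (w I j) ((w (insert j I) i) ((castMap V (Finset.insert_comm j i I)) z)) :=
      fun z => by simpa using ContinuousLinearMap.ext_iff.mp Rw z
    have pRm' : ∀ z, (w (insert j I) i) ((castMap V (Finset.insert_comm j i I))
        ((u (insert i I) j) z)) = (u I j) ((w I i) z) :=
      fun z => by simpa using ContinuousLinearMap.ext_iff.mp Rm' z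
    ext z
    simp only [ContinuousLinearMap.comp_apply]
    rw [pRw, pRm']
  have hUW : ∀ (I : Finset (Fin n)) (i j : Fin n), i ∉ I → j ∉ I → i ≠ j →
      (u I i).comp ((w I j).comp (u I j))
        = ((w (insert i I) j).comp (u (insert i I) j)).comp (u I i) := by
    intro I i j hi hj hij
    obtain ⟨Ru, -, Rm⟩ := hrep I i j hi hj hij
    have pRu : ∀ z, (castMap V (Finset.insert_comm j i I)) ((u (insert i I) j) ((u I i) z))
        = (u (insert j I) i) ((u I j) z) :=
      fun z => by simpa using ContinuousLinearMap.ext_iff.mp Ru z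
    have pRm : ∀ z, (w (insert i I) j) ((castMap V (Finset.insert_comm i j I))
        ((u (insert j I) i) z)) = (u I i) ((w I j) z) :=
      fun z => by simpa using ContinuousLinearMap.ext_iff.mp Rm z
    have pcc : ∀ z, (castMap V (Finset.insert_comm i j I))
        ((castMap V (Finset.insert_comm j i I)) z) = z := fun z => by
      have h3 := QAux.castMap_trans V (Finset.insert_comm j i I) (Finset.insert_comm i j I)
      have h4 := ContinuousLinearMap.ext_iff.mp h3 z
      simp only [ContinuousLinearMap.comp_apply] at h4
      rw [h4, QAux.castMap_self]
      rfl
    ext z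
    simp only [ContinuousLinearMap.comp_apply]
    rw [← pRm, ← pRu, pcc]
  have hwuComm : ∀ (I : Finset (Fin n)) (i j : Fin n), i ∉ I → j ∉ I → i ≠ j →
      ((w I i).comp (u I i)).comp ((w I j).comp (u I j))
        = ((w I j).comp (u I j)).comp ((w I i).comp (u I i)) := by
    intro I i j hi hj hij
    have p1 : ∀ z, (u I i) ((w I j) ((u I j) z))
        = (w (insert i I) j) ((u (insert i I) j) ((u I i) z)) :=
      fun z => by simpa using ContinuousLinearMap.ext_iff.mp (hUW I i j hi hj hij) z
    have p2 : ∀ z, (w I i) ((w (insert i I) j) ((u (insert i I) j) z))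
        = (w I j) ((u I j) ((w I i) z)) :=
      fun z => by simpa using ContinuousLinearMap.ext_iff.mp (hWU I i j hi hj hij) z
    ext z
    simp only [ContinuousLinearMap.comp_apply]
    rw [p1, p2]
  have hmem : ∀ (I : Finset (Fin n)) (i j : Fin n), j ∉ I → i ≠ j → j ∉ insert i I := by
    intro I i j hj hij
    rw [Finset.mem_insert]
    push_neg
    exact ⟨hij.symm, hj⟩
  -- intertwining of the `s` maps
  have hUs : ∀ (I : Finset (Fin n)) (i j : Fin n), i ∉ I → j ∉ I → i ≠ j →
      (u I i).comp (s I j) = (s (insert i I) j).comp (u I i) := by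
    intro I i j hi hj hij
    exact QAux.key_intertwine (hspec I j hj) (hspec (insert i I) j (hmem I i j hj hij)) (by
      rw [hexp I j hj, hexp (insert i I) j (hmem I i j hj hij),
        ContinuousLinearMap.comp_add, ContinuousLinearMap.add_comp,
        ContinuousLinearMap.comp_id, ContinuousLinearMap.id_comp, hUW I i j hi hj hij])
  have hWs : ∀ (I : Finset (Fin n)) (i j : Fin n), i ∉ I → j ∉ I → i ≠ j →
      (w I i).comp (s (insert i I) j) = (s I j).comp (w I i) := by
    intro I i j hi hj hij
    exact QAux.key_intertwine (hspec (insert i I) j (hmem I i j hj hij)) (hspec I j hj) (by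
      rw [hexp I j hj, hexp (insert i I) j (hmem I i j hj hij),
        ContinuousLinearMap.comp_add, ContinuousLinearMap.add_comp,
        ContinuousLinearMap.comp_id, ContinuousLinearMap.id_comp, hWU I i j hi hj hij])
  have hsComm : ∀ (I : Finset (Fin n)) (i j : Fin n), i ∉ I → j ∉ I → i ≠ j →
      (s I i).comp (s I j) = (s I j).comp (s I i) := by
    intro I i j hi hj hij
    have hexpComm : (expEnd (s I i)).comp (expEnd (s I j))
        = (expEnd (s I j)).comp (expEnd (s I i)) := by
      rw [hexp I i hi, hexp I j hj]
      simp only [ContinuousLinearMap.comp_add, ContinuousLinearMap.add_comp,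
        ContinuousLinearMap.comp_id, ContinuousLinearMap.id_comp]
      rw [hwuComm I i j hi hj hij]
      abel
    have h5 : (expEnd (s I j)).comp (s I i) = (s I i).comp (expEnd (s I j)) :=
      QAux.key_intertwine (hspec I i hi) (hspec I i hi) hexpComm.symm
    exact QAux.key_intertwine (hspec I j hj) (hspec I j hj) h5.symm
  -- inverse ψ intertwinings
  have hψU : ∀ (I : Finset (Fin n)) (i j : Fin n), i ∉ I → j ∉ I → i ≠ j →
      (Ring.inverse (psiEnd (s (insert i I) j))).comp (u I i)
        = (u I i).comp (Ring.inverse (psiEnd (s I j))) := by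
    intro I i j hi hj hij
    exact QAux.inverse_intertwine (hunit I j hj) (hunit (insert i I) j (hmem I i j hj hij))
      (QAux.intertwine_psi (hUs I i j hi hj hij))
  have hψW : ∀ (I : Finset (Fin n)) (i j : Fin n), i ∉ I → j ∉ I → i ≠ j →
      (Ring.inverse (psiEnd (s I j))).comp (w I i)
        = (w I i).comp (Ring.inverse (psiEnd (s (insert i I) j))) := by
    intro I i j hi hj hij
    exact QAux.inverse_intertwine (hunit (insert i I) j (hmem I i j hj hij)) (hunit I j hj)
      (QAux.intertwine_psi (hWs I i j hi hj hij))
  have hψcomm : ∀ (I : Finset (Fin n)) (i j : Fin n), i ∉ I → j ∉ I → i ≠ j →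
      (Ring.inverse (psiEnd (s I i))).comp (Ring.inverse (psiEnd (s I j)))
        = (Ring.inverse (psiEnd (s I j))).comp (Ring.inverse (psiEnd (s I i))) := by
    intro I i j hi hj hij
    have h6 : (s I i).comp (psiEnd (s I j)) = (psiEnd (s I j)).comp (s I i) :=
      QAux.intertwine_psi (hsComm I i j hi hj hij)
    have h7 : (psiEnd (s I j)).comp (psiEnd (s I i))
        = (psiEnd (s I i)).comp (psiEnd (s I j)) :=
      QAux.intertwine_psi h6.symm
    have h8 := QAux.inverse_intertwine (hunit I i hi) (hunit I i hi) h7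
    exact (QAux.inverse_intertwine (hunit I j hj) (hunit I j hj) h8).symm
  constructor
  · -- the quiver relations
    intro I i j hi hj hij
    obtain ⟨Ru, Rw, Rm⟩ := hrep I i j hi hj hij
    refine ⟨Ru, ?_, ?_⟩
    · -- relation for the new `y`-maps
      have p1 : ∀ z, (w I i) ((Ring.inverse (psiEnd (s (insert i I) j))) z)
          = (Ring.inverse (psiEnd (s I j))) ((w I i) z) :=
        fun z => by simpa using (ContinuousLinearMap.ext_iff.mp (hψW I i j hi hj hij) z).symm
      have p2 : ∀ z, (w I i) ((w (insert i I) j) z)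
          = (w I j) ((w (insert j I) i) ((castMap V (Finset.insert_comm j i I)) z)) :=
        fun z => by simpa using ContinuousLinearMap.ext_iff.mp Rw z
      have p3 : ∀ z, (Ring.inverse (psiEnd (s I i))) ((Ring.inverse (psiEnd (s I j))) z)
          = (Ring.inverse (psiEnd (s I j))) ((Ring.inverse (psiEnd (s I i))) z) :=
        fun z => by simpa using ContinuousLinearMap.ext_iff.mp (hψcomm I i j hi hj hij) z
      have p4 : ∀ z, (w I j) ((Ring.inverse (psiEnd (s (insert j I) i))) z)
          = (Ring.inverse (psiEnd (s I i))) ((w I j) z) :=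
        fun z => by simpa using (ContinuousLinearMap.ext_iff.mp (hψW I j i hj hi hij.symm) z).symm
      ext z
      simp only [ContinuousLinearMap.comp_apply]
      rw [p1, p2, p3, ← p4]
    · -- mixed relation
      have pRm : ∀ z, (w (insert i I) j) ((castMap V (Finset.insert_comm i j I))
          ((u (insert j I) i) z)) = (u I i) ((w I j) z) :=
        fun z => by simpa using ContinuousLinearMap.ext_iff.mp Rm z
      have p5 : ∀ z, (Ring.inverse (psiEnd (s (insert i I) j))) ((u I i) z)
          = (u I i) ((Ring.inverse (psiEnd (s I j))) z) :=
        fun z => by simpa using ContinuousLinearMap.ext_iff.mp (hψU I i j hi hj hij) z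
      ext z
      simp only [ContinuousLinearMap.comp_apply]
      rw [pRm, p5]
  · -- the spectral conditions
    intro I i hi
    constructor
    · apply QAux.spectrum_swap_subset (f := u I i)
        (g := (Ring.inverse (psiEnd (s I i))).comp (w I i))
      rw [hxu I i hi]
      exact hspec I i hi
    · show spectrum ℂ (((Ring.inverse (psiEnd (s I i))).comp (w I i)).comp (u I i)) ⊆ Sigma1
      rw [hxu I i hi]
      exact hspec I i hi
end
end

section
/- Let M ∈ ℕ⁺ and let A be an M × M complex matrix. Define the matrix-valued entire functions φ_A(w) := Σ_{k=0}^∞ (A^k / (k+1)!) · w^{k+1} and ψ(A) := Σ_{k=1}^∞ ((2πi)^k / k!) · A^{k−1}. Then for every w ∈ ℂ, φ_A(w + 2πi) − φ_A(w) = ψ(A) · exp(A·w). -/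
open Complex

noncomputable section

/-- The matrix-valued entire function `φ_A(w) := ∑_{k=0}^∞ (A^k / (k+1)!) · w^(k+1)`. -/
def phiMat {M : ℕ} (A : Matrix (Fin M) (Fin M) ℂ) (w : ℂ) : Matrix (Fin M) (Fin M) ℂ :=
  ∑' k : ℕ, ((w ^ (k + 1) / (Nat.factorial (k + 1) : ℂ)) • A ^ k)

/-- The matrix power series `ψ(A) := ∑_{k=1}^∞ ((2πi)^k / k!) A^(k-1)`. -/
def psiMat {M : ℕ} (A : Matrix (Fin M) (Fin M) ℂ) : Matrix (Fin M) (Fin M) ℂ :=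
  ∑' k : ℕ, ((twoPiI ^ (k + 1) / (Nat.factorial (k + 1) : ℂ)) • A ^ k)

open Finset in
/-- The scalar binomial identity behind the variation formula. -/
lemma scalar_binom_aux (v w : ℂ) (n : ℕ) :
    ∑ k ∈ range (n + 1), v ^ (k + 1) * w ^ (n - k) /
      ((Nat.factorial (k + 1) : ℂ) * (Nat.factorial (n - k) : ℂ)) =
    ((w + v) ^ (n + 1) - w ^ (n + 1)) / (Nat.factorial (n + 1) : ℂ) := by
  have hpow : (w + v) ^ (n + 1) - w ^ (n + 1) =
      ∑ k ∈ range (n + 1), v ^ (k + 1) * w ^ (n - k) * ((n + 1).choose (k + 1) : ℂ) := by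
    rw [add_pow, Finset.sum_range_succ]
    simp only [Nat.choose_self, Nat.cast_one, mul_one, Nat.sub_self, pow_zero]
    rw [add_sub_cancel_right, ← Finset.sum_range_reflect]
    refine Finset.sum_congr rfl fun k hk => ?_
    rw [Finset.mem_range] at hk
    simp only [Nat.add_sub_cancel]
    have h1 : n + 1 - (n - k) = k + 1 := by omega
    have h2 : (n + 1).choose (n - k) = (n + 1).choose (k + 1) := by
      rw [show n - k = n + 1 - (k + 1) by omega, Nat.choose_symm (by omega)]
    rw [h1, h2]; ring
  rw [hpow, Finset.sum_div]
  refine Finset.sum_congr rfl fun k hk => ?_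
  rw [Finset.mem_range] at hk
  have hc : ((k + 1).factorial : ℂ) * ((n - k).factorial : ℂ) * ((n + 1).choose (k + 1) : ℂ)
      = ((n + 1).factorial : ℂ) := by
    have := Nat.choose_mul_factorial_mul_factorial (show k + 1 ≤ n + 1 by omega)
    have h3 : n + 1 - (k + 1) = n - k := by omega
    rw [h3] at this
    push_cast [← this]
    ring
  have h1 : ((k+1).factorial : ℂ) ≠ 0 := Nat.cast_ne_zero.2 (Nat.factorial_ne_zero _)
  have h2 : ((n-k).factorial : ℂ) ≠ 0 := Nat.cast_ne_zero.2 (Nat.factorial_ne_zero _)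
  have h4 : ((n+1).factorial : ℂ) ≠ 0 := Nat.cast_ne_zero.2 (Nat.factorial_ne_zero _)
  rw [div_eq_div_iff (mul_ne_zero h1 h2) h4, ← hc]
  ring

section MatAux

variable {M : ℕ}

attribute [local instance] Matrix.linftyOpSemiNormedRing Matrix.linftyOpNormedRing
  Matrix.linftyOpNormedAlgebra

lemma summable_norm_phi_term (A : Matrix (Fin M) (Fin M) ℂ) (c : ℂ) :
    Summable fun k : ℕ => ‖(c ^ (k + 1) / (Nat.factorial (k + 1) : ℂ)) • A ^ k‖ := by
  have h := (NormedSpace.norm_expSeries_summable' (𝕂 := ℂ) (c • A)).mul_left ‖c‖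
  refine h.of_nonneg_of_le (fun k => norm_nonneg _) fun k => ?_
  rw [norm_smul, smul_pow, norm_smul, norm_smul, norm_pow (a := c)]
  have h1 : ‖c ^ (k + 1) / (Nat.factorial (k + 1) : ℂ)‖
      = ‖c‖ ^ (k + 1) / ((k + 1).factorial : ℝ) := by
    rw [norm_div, norm_pow]; norm_num
  have h2 : ‖((Nat.factorial k : ℂ))⁻¹‖ = ((k.factorial : ℝ))⁻¹ := by
    rw [norm_inv]; norm_num
  rw [h1, h2]
  have h3 : ‖c‖ * (((k.factorial : ℝ))⁻¹ * (‖c‖ ^ k * ‖A ^ k‖))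
      = ‖c‖ ^ (k + 1) / (k.factorial : ℝ) * ‖A ^ k‖ := by
    rw [pow_succ]; ring
  rw [h3]
  refine mul_le_mul_of_nonneg_right ?_ (norm_nonneg _)
  refine div_le_div_of_nonneg_left (by positivity) (Nat.cast_pos.2 (Nat.factorial_pos _)) ?_
  exact_mod_cast Nat.factorial_le (Nat.le_succ k)

lemma summable_phi_term (A : Matrix (Fin M) (Fin M) ℂ) (c : ℂ) :
    Summable fun k : ℕ => (c ^ (k + 1) / (Nat.factorial (k + 1) : ℂ)) • A ^ k :=
  (summable_norm_phi_term A c).of_norm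

open Finset in
lemma phiMat_shift (A : Matrix (Fin M) (Fin M) ℂ) (w v : ℂ) :
    phiMat A (w + v) - phiMat A w = phiMat A v * NormedSpace.exp (w • A) := by
  rw [NormedSpace.exp_eq_tsum (𝕂 := ℂ)]
  unfold phiMat
  beta_reduce
  erw [tsum_mul_tsum_eq_tsum_sum_range_of_summable_norm (summable_norm_phi_term A v)
    (NormedSpace.norm_expSeries_summable' (𝕂 := ℂ) (w • A))]
  rw [← Summable.tsum_sub (summable_phi_term A (w + v)) (summable_phi_term A w)]
  refine tsum_congr fun n => ?_
  have hterm : ∀ k ∈ range (n + 1),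
      ((v ^ (k + 1) / ((Nat.factorial (k + 1) : ℂ))) • A ^ k) *
        (((Nat.factorial (n - k) : ℂ))⁻¹ • (w • A) ^ (n - k))
      = (v ^ (k + 1) * w ^ (n - k) /
          ((Nat.factorial (k + 1) : ℂ) * (Nat.factorial (n - k) : ℂ))) • A ^ n := by
    intro k hk
    rw [Finset.mem_range] at hk
    rw [smul_pow, smul_smul, smul_mul_smul_comm, ← pow_add,
      show k + (n - k) = n by omega]
    congr 1
    ring
  rw [Finset.sum_congr rfl hterm, ← Finset.sum_smul, scalar_binom_aux, sub_div, sub_smul]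

end MatAux

/-- For every square complex matrix `A` and every `w ∈ ℂ`,
`φ_A(w + 2πi) − φ_A(w) = ψ(A) · exp(A·w)`. -/
theorem phiMat_variation {M : ℕ} (hM : 0 < M) (A : Matrix (Fin M) (Fin M) ℂ) (w : ℂ) :
    phiMat A (w + twoPiI) - phiMat A w = psiMat A * NormedSpace.exp (w • A) := by
  have : psiMat A = phiMat A twoPiI := rfl
  rw [this, phiMat_shift]
end
end

section
/- Let M ∈ ℕ⁺ and let A be an M × M complex matrix whose spectrum is contained in Σ₁. Then for every w ∈ ℂ, the matrix φ_A(w + 2πi) − φ_A(w) is invertible, where φ_A(w) := Σ_{k=0}^∞ (A^k / (k+1)!) · w^{k+1}. -/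
open Complex

noncomputable section

attribute [local instance] Matrix.linftyOpNormedAddCommGroup Matrix.linftyOpNormedRing
  Matrix.linftyOpNormedAlgebra

open scoped Matrix

namespace PhiAux

/-- The scalar version of `phiMat`. -/
def phiC (lam w : ℂ) : ℂ := ∑' k : ℕ, (w ^ (k + 1) / (Nat.factorial (k + 1) : ℂ)) * lam ^ k

lemma summable_gen {B : Type*} [NormedRing B] [NormedAlgebra ℂ B] [NormOneClass B]
    [CompleteSpace B] (w : ℂ) (A : B) :
    Summable (fun k : ℕ => (w ^ (k + 1) / (Nat.factorial (k + 1) : ℂ)) • A ^ k) := by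
  refine Summable.of_norm_bounded (g := fun k => ‖w‖ * ((‖w‖ * ‖A‖) ^ k / k.factorial)) ?_ ?_
  · exact (Real.summable_pow_div_factorial (‖w‖ * ‖A‖)).mul_left ‖w‖
  · intro k
    rw [norm_smul]
    have h1 : ‖w ^ (k + 1) / ((Nat.factorial (k + 1) : ℂ))‖ ≤ ‖w‖ ^ (k + 1) / k.factorial := by
      rw [norm_div, norm_pow, Complex.norm_natCast]
      have hk : (Nat.factorial k : ℝ) ≤ (Nat.factorial (k+1) : ℝ) := by
        exact_mod_cast Nat.factorial_le (Nat.le_succ k)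
      have hk0 : (0:ℝ) < (Nat.factorial k : ℝ) := by exact_mod_cast Nat.factorial_pos k
      exact div_le_div_of_nonneg_left (by positivity) hk0 hk
    calc ‖w ^ (k + 1) / ((Nat.factorial (k + 1) : ℂ))‖ * ‖A ^ k‖
        ≤ (‖w‖ ^ (k + 1) / k.factorial) * ‖A‖ ^ k := by
          apply mul_le_mul h1 (norm_pow_le A k) (norm_nonneg _) (by positivity)
      _ = ‖w‖ * ((‖w‖ * ‖A‖) ^ k / k.factorial) := by
          rw [pow_succ', mul_pow]; ring

lemma summable_scalar (w lam : ℂ) :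
    Summable (fun k : ℕ => (w ^ (k + 1) / (Nat.factorial (k + 1) : ℂ)) * lam ^ k) := by
  simpa [smul_eq_mul] using summable_gen w lam

lemma phiC_zero (w : ℂ) : phiC 0 w = w := by
  unfold phiC
  rw [tsum_eq_single 0 (by intro k hk; simp [zero_pow hk])]
  simp

lemma tsum_succ_exp (z : ℂ) :
    ∑' k : ℕ, z ^ (k + 1) / ((Nat.factorial (k + 1) : ℂ)) = Complex.exp z - 1 := by
  have hs : Summable (fun n : ℕ => z ^ n / (Nat.factorial n : ℂ)) :=
    NormedSpace.expSeries_div_summable z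
  have h0 : Complex.exp z = ∑' n : ℕ, z ^ n / (Nat.factorial n : ℂ) := by
    rw [Complex.exp_eq_exp_ℂ, NormedSpace.exp_eq_tsum_div]
  rw [h0, hs.tsum_eq_zero_add]
  simp

lemma mul_phiC (lam w : ℂ) : lam * phiC lam w = Complex.exp (lam * w) - 1 := by
  unfold phiC
  rw [← Summable.tsum_mul_left lam (summable_scalar w lam), ← tsum_succ_exp (lam * w)]
  congr 1; funext k
  rw [mul_pow, pow_succ]; ring

/-- Nonvanishing of the scalar variation on Σ₁. -/
lemma variation_ne_zero {lam : ℂ} (hlam : lam ∈ Sigma1) (w : ℂ) :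
    phiC lam (w + twoPiI) - phiC lam w ≠ 0 := by
  rcases eq_or_ne lam 0 with rfl | h0
  · rw [phiC_zero, phiC_zero]
    simp only [add_sub_cancel_left, twoPiI]
    simp [Real.pi_ne_zero, Complex.I_ne_zero, Complex.ext_iff, Real.pi_ne_zero]
  · intro hcontra
    have h1 : lam * (phiC lam (w + twoPiI) - phiC lam w) = 0 := by rw [hcontra, mul_zero]
    rw [mul_sub, mul_phiC, mul_phiC, sub_sub_sub_cancel_right, mul_add, Complex.exp_add,
      sub_eq_zero] at h1
    have hexp : Complex.exp (lam * twoPiI) = 1 := by field_simp at h1; exact h1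
    rw [twoPiI] at hexp
    obtain ⟨n, hn⟩ := Complex.exp_eq_one_iff.mp hexp
    have h2pi : (2 * Real.pi * Complex.I : ℂ) ≠ 0 := by
      simp [Real.pi_ne_zero, Complex.I_ne_zero]
    have hlamn : lam = (n : ℂ) := by
      exact mul_right_cancel₀ h2pi (by linear_combination hn)
    subst hlamn
    obtain ⟨hre1, hre2, _, him⟩ := hlam
    simp only [Complex.sub_re, Complex.intCast_re, Complex.one_re, Complex.sub_im,
      Complex.intCast_im, Complex.one_im, sub_zero] at hre1 hre2 him
    have hn0 : n ≠ 0 := by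
      intro h; apply h0; rw [h]; norm_num
    have hb1 : (0:ℤ) ≤ n := by exact_mod_cast (by linarith : (0:ℝ) ≤ (n:ℝ))
    have hb2 : n ≤ (1:ℤ) := by exact_mod_cast (by linarith : (n:ℝ) ≤ 1)
    interval_cases n
    · exact absurd rfl hn0
    · exact lt_irrefl 0 (him (by norm_num))


lemma pow_mulVec {M : ℕ} (A : Matrix (Fin M) (Fin M) ℂ) {lam : ℂ} {v : Fin M → ℂ}
    (hv : A *ᵥ v = lam • v) (k : ℕ) : (A ^ k) *ᵥ v = lam ^ k • v := by
  induction k with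
  | zero => simp
  | succ n ih =>
      rw [pow_succ, ← Matrix.mulVec_mulVec, hv, Matrix.mulVec_smul, ih, smul_smul, pow_succ,
        mul_comm]

lemma phiMat_mulVec {M : ℕ} [Nonempty (Fin M)] (A : Matrix (Fin M) (Fin M) ℂ) (w lam : ℂ)
    {v : Fin M → ℂ} (hv : A *ᵥ v = lam • v) :
    (phiMat A w) *ᵥ v = (phiC lam w) • v := by
  classical
  let L0 : Matrix (Fin M) (Fin M) ℂ →ₗ[ℂ] (Fin M → ℂ) :=
    { toFun := fun B => B *ᵥ v,
      map_add' := fun B C => Matrix.add_mulVec B C v,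
      map_smul' := fun c B => Matrix.smul_mulVec c B v }
  let L : Matrix (Fin M) (Fin M) ℂ →L[ℂ] (Fin M → ℂ) := LinearMap.toContinuousLinearMap L0
  have hsum := summable_gen (B := Matrix (Fin M) (Fin M) ℂ) w A
  have h1 : (phiMat A w) *ᵥ v
      = ∑' k : ℕ, L ((w ^ (k + 1) / (Nat.factorial (k + 1) : ℂ)) • A ^ k) :=
    L.map_tsum hsum
  rw [h1]
  have h2 : ∀ k : ℕ, L ((w ^ (k + 1) / (Nat.factorial (k + 1) : ℂ)) • A ^ k)
      = ((w ^ (k + 1) / (Nat.factorial (k + 1) : ℂ)) * lam ^ k) • v := by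
    intro k
    show ((w ^ (k + 1) / (Nat.factorial (k + 1) : ℂ)) • A ^ k) *ᵥ v = _
    rw [Matrix.smul_mulVec, pow_mulVec A hv k, smul_smul]
  simp_rw [h2]
  exact (summable_scalar w lam).tsum_smul_const v

lemma phiMat_mul_comm {M : ℕ} [Nonempty (Fin M)] (A : Matrix (Fin M) (Fin M) ℂ) (w : ℂ) :
    phiMat A w * A = A * phiMat A w := by
  classical
  unfold phiMat
  erw [← Summable.tsum_mul_right A (summable_gen w A), ← Summable.tsum_mul_left A (summable_gen w A)]
  congr 1; funext k
  rw [smul_mul_assoc, mul_smul_comm, ← pow_succ, ← pow_succ']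

end PhiAux

open PhiAux in
/-- If the spectrum of `A` is contained in Σ₁, then for every `w ∈ ℂ` the variation
`φ_A(w + 2πi) − φ_A(w)` is an invertible matrix. -/
theorem phiMat_variation_isUnit {M : ℕ} (hM : 0 < M) (A : Matrix (Fin M) (Fin M) ℂ)
    (hA : spectrum ℂ A ⊆ Sigma1) (w : ℂ) :
    IsUnit (phiMat A (w + twoPiI) - phiMat A w) := by
  classical
  haveI : Nonempty (Fin M) := Fin.pos_iff_nonempty.mp hM
  set D := phiMat A (w + twoPiI) - phiMat A w with hD
  by_contra hDu
  have hdet : D.det = 0 := by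
    by_contra h
    exact hDu ((Matrix.isUnit_iff_isUnit_det D).mpr (Ne.isUnit h))
  obtain ⟨v, hv0, hv⟩ := (Matrix.exists_mulVec_eq_zero_iff).mpr hdet
  -- the kernel of D is A-invariant
  let K := LinearMap.ker (Matrix.mulVecLin D)
  have hcomm : D * A = A * D := by
    rw [hD, sub_mul, mul_sub, phiMat_mul_comm, phiMat_mul_comm]
  have hinvar : ∀ x ∈ K, (Matrix.mulVecLin A) x ∈ K := by
    intro x hx
    have hx' : D *ᵥ x = 0 := by
      have := LinearMap.mem_ker.mp hx
      rwa [Matrix.mulVecLin_apply] at this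
    refine LinearMap.mem_ker.mpr ?_
    rw [Matrix.mulVecLin_apply, Matrix.mulVecLin_apply, Matrix.mulVec_mulVec, hcomm,
      ← Matrix.mulVec_mulVec, hx', Matrix.mulVec_zero]
  let f : Module.End ℂ K := (Matrix.mulVecLin A).restrict hinvar
  have hvK : v ∈ K := LinearMap.mem_ker.mpr (by rw [Matrix.mulVecLin_apply]; exact hv)
  haveI : Nontrivial K := by
    refine ⟨⟨v, hvK⟩, 0, fun h => hv0 ?_⟩
    have h2 : v = ((0 : K) : Fin M → ℂ) := congrArg Subtype.val h
    rwa [ZeroMemClass.coe_zero] at h2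
  obtain ⟨lam, hlam⟩ := Module.End.exists_eigenvalue f
  obtain ⟨u, hu⟩ := hlam.exists_hasEigenvector
  have hAu : A *ᵥ (u : Fin M → ℂ) = lam • (u : Fin M → ℂ) := by
    have h' := congrArg Subtype.val hu.apply_eq_smul
    rw [LinearMap.restrict_coe_apply, Matrix.mulVecLin_apply] at h'
    rw [h']
    rfl
  have hu0 : (u : Fin M → ℂ) ≠ 0 := by
    intro h
    exact hu.right (Subtype.ext (h.trans (ZeroMemClass.coe_zero K).symm))
  -- lam is in the spectrum of A
  have hspec : lam ∈ spectrum ℂ A := by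
    rw [spectrum.mem_iff]
    intro hun
    have hdet' : (algebraMap ℂ (Matrix (Fin M) (Fin M) ℂ) lam - A).det ≠ 0 := by
      intro h
      exact ((Matrix.isUnit_iff_isUnit_det _).mp hun).ne_zero (by simpa using h)
    have : (algebraMap ℂ (Matrix (Fin M) (Fin M) ℂ) lam - A) *ᵥ (u : Fin M → ℂ) = 0 := by
      rw [Matrix.sub_mulVec, hAu]
      have : (algebraMap ℂ (Matrix (Fin M) (Fin M) ℂ) lam) *ᵥ (u : Fin M → ℂ)
          = lam • (u : Fin M → ℂ) := by
        rw [Matrix.algebraMap_eq_diagonal]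
        ext i
        simp [Matrix.mulVec_diagonal, Pi.algebraMap_apply, Algebra.algebraMap_self_apply]
      rw [this, sub_self]
    exact hdet' (Matrix.exists_mulVec_eq_zero_iff.mp ⟨u, hu0, this⟩)
  -- contradiction
  have hker : D *ᵥ (u : Fin M → ℂ) = 0 := by
    have := LinearMap.mem_ker.mp u.2
    rwa [Matrix.mulVecLin_apply] at this
  have heig : D *ᵥ (u : Fin M → ℂ)
      = (phiC lam (w + twoPiI) - phiC lam w) • (u : Fin M → ℂ) := by
    rw [hD, Matrix.sub_mulVec, phiMat_mulVec A _ lam hAu, phiMat_mulVec A _ lam hAu, sub_smul]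
  rw [hker] at heig
  rcases smul_eq_zero.mp heig.symm with h | h
  · exact variation_ne_zero (hA hspec) w h
  · exact hu0 h
end
end
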